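/- arXiv:1112.4757 — 6 statements merged into one kernel-verified Lean document; each statement's English description precedes it below -/
import Mathlib

section
/- For convex bodies K, L in ℝⁿ and θ ∈ [0,1], |K +_θ L|^{1/n} ≥ (1 - θ^{1/n})(|K|^{1/n} + |L|^{1/n}). -/
open MeasureTheory Set
open scoped Pointwise
open scoped ENNReal NNReal

/-- The `θ`-convolution body of `K` and `L`. -/
noncomputable def convBody (n : ℕ) (θ : ℝ) (K L : Set (EuclideanSpace ℝ (Fin n))) :
    Set (EuclideanSpace ℝ (Fin n)) :=
  {x ∈ K + L |
    ENNReal.ofReal θ * (⨆ z : EuclideanSpace ℝ (Fin n), volume (K ∩ ({z} - L))) ≤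
      volume (K ∩ ({x} - L))}

lemma sumset_compact (A B : Set ℝ) (hA : IsCompact A) (hB : IsCompact B)
    (hAne : A.Nonempty) (hBne : B.Nonempty) :
    volume A + volume B ≤ volume (A + B) := by
  set a := sSup A with ha
  set b := sInf B with hb
  have haA : a ∈ A := hA.sSup_mem hAne
  have hbB : b ∈ B := hB.sInf_mem hBne
  have h1 : b +ᵥ A ⊆ A + B := by
    rintro x hx
    rw [mem_vadd_set] at hx
    obtain ⟨y, hy, rfl⟩ := hx
    simpa [add_comm] using Set.add_mem_add hy hbB
  have h2 : a +ᵥ B ⊆ A + B := by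
    rintro x hx
    rw [mem_vadd_set] at hx
    obtain ⟨y, hy, rfl⟩ := hx
    exact Set.add_mem_add haA hy
  have hint : (b +ᵥ A) ∩ (a +ᵥ B) ⊆ {a + b} := by
    rintro x ⟨hx1, hx2⟩
    rw [mem_vadd_set] at hx1 hx2
    obtain ⟨y, hy, rfl⟩ := hx1
    obtain ⟨z, hz, hzx⟩ := hx2
    have hya : y ≤ a := le_csSup hA.bddAbove hy
    have hbz : b ≤ z := csInf_le hB.bddBelow hz
    have : b +ᵥ y = a + b := by
      have h1 : b + y ≤ a + b := by simpa [add_comm] using add_le_add_right hya b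
      have h2 : a + b ≤ b + y := by
        have h3 : a + b ≤ a + z := add_le_add_right hbz a
        have h4 : a + z = b + y := hzx
        linarith
      exact le_antisymm h1 h2
    simpa using this
  have hABm : MeasurableSet (a +ᵥ B) := hB.measurableSet.const_vadd a
  have key := measure_union_add_inter (μ := volume) (b +ᵥ A) hABm
  have hz : volume ((b +ᵥ A) ∩ (a +ᵥ B)) = 0 :=
    measure_mono_null hint (by simp)
  calc volume A + volume B = volume (b +ᵥ A) + volume (a +ᵥ B) := by
        rw [measure_vadd, measure_vadd]
    _ = volume ((b +ᵥ A) ∪ (a +ᵥ B)) + volume ((b +ᵥ A) ∩ (a +ᵥ B)) := key.symm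
    _ = volume ((b +ᵥ A) ∪ (a +ᵥ B)) := by rw [hz, add_zero]
    _ ≤ volume (A + B) := measure_mono (union_subset h1 h2)

lemma sumset_meas (A B : Set ℝ) (hA : MeasurableSet A) (hB : MeasurableSet B)
    (hAne : A.Nonempty) (hBne : B.Nonempty) :
    volume A + volume B ≤ volume (A + B) := by
  obtain ⟨a, haA⟩ := hAne
  obtain ⟨b, hbB⟩ := hBne
  rcases eq_or_ne (volume A) ⊤ with hAt | hAt
  · have : A + {b} ⊆ A + B := add_subset_add_left (by simpa using hbB)
    have hA' : volume (A + {b}) = volume A := by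
      rw [Set.add_singleton]
      have : (fun x => x + b) '' A = b +ᵥ A := by
        ext x
        simp only [mem_vadd_set, mem_image]
        constructor
        · rintro ⟨y, hy, rfl⟩; exact ⟨y, hy, by simp [vadd_eq_add]; ring⟩
        · rintro ⟨y, hy, rfl⟩; exact ⟨y, hy, by simp [vadd_eq_add]; ring⟩
      rw [this, measure_vadd]
    have : (⊤:ℝ≥0∞) ≤ volume (A + B) := by
      rw [← hAt, ← hA']; exact measure_mono this
    simp [top_le_iff.mp this]
  rcases eq_or_ne (volume B) ⊤ with hBt | hBt
  · have : {a} + B ⊆ A + B := add_subset_add_right (by simpa using haA)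
    have hB' : volume ({a} + B) = volume B := by
      rw [Set.singleton_add]
      have : (fun x => a + x) '' B = a +ᵥ B := by
        ext x
        simp only [mem_vadd_set, mem_image]
        constructor
        · rintro ⟨y, hy, rfl⟩; exact ⟨y, hy, rfl⟩
        · rintro ⟨y, hy, rfl⟩; exact ⟨y, hy, rfl⟩
      rw [this, measure_vadd]
    have : (⊤:ℝ≥0∞) ≤ volume (A + B) := by
      rw [← hBt, ← hB']; exact measure_mono this
    simp [top_le_iff.mp this]
  refine ENNReal.le_of_forall_pos_le_add fun ε hε _ => ?_
  have hε2 : ((ε : ℝ≥0∞)/2) ≠ 0 := by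
    simp [ENNReal.div_eq_zero_iff, (by exact_mod_cast hε.ne' : (ε:ℝ≥0∞) ≠ 0)]
  obtain ⟨KA, hKAsub, hKAc, hKAlt⟩ := hA.exists_isCompact_lt_add hAt (ε := ε/2) hε2
  obtain ⟨KB, hKBsub, hKBc, hKBlt⟩ := hB.exists_isCompact_lt_add hBt (ε := ε/2) hε2
  set KA' := insert a KA with hKA'
  set KB' := insert b KB with hKB'
  have hKA'c : IsCompact KA' := hKAc.insert a
  have hKB'c : IsCompact KB' := hKBc.insert b
  have hKA'sub : KA' ⊆ A := insert_subset haA hKAsub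
  have hKB'sub : KB' ⊆ B := insert_subset hbB hKBsub
  have key := sumset_compact KA' KB' hKA'c hKB'c ⟨a, mem_insert _ _⟩ ⟨b, mem_insert _ _⟩
  have hle : volume (KA' + KB') ≤ volume (A + B) :=
    measure_mono (add_subset_add hKA'sub hKB'sub)
  have h1 : volume A ≤ volume KA' + ε/2 :=
    le_trans (hKAlt.le) (add_le_add_left (measure_mono (subset_insert _ _)) _)
  have h2 : volume B ≤ volume KB' + ε/2 :=
    le_trans (hKBlt.le) (add_le_add_left (measure_mono (subset_insert _ _)) _)
  calc volume A + volume B ≤ (volume KA' + ε/2) + (volume KB' + ε/2) := add_le_add h1 h2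
    _ = (volume KA' + volume KB') + (ε/2 + ε/2) := by ring
    _ ≤ volume (A + B) + ε := by
        rw [ENNReal.add_halves]
        exact add_le_add_left (key.trans hle) _

lemma layercake_ennreal {α : Type*} [MeasurableSpace α] (μ : Measure α)
    (f : α → ℝ≥0∞) (hf : Measurable f) :
    ∫⁻ x, f x ∂μ = ∫⁻ t in Ioi (0:ℝ), μ {x | ENNReal.ofReal t < f x} := by
  rcases eq_or_ne (μ {x | f x = ⊤}) 0 with hm | hm
  · have hae : f =ᵐ[μ] fun x => ENNReal.ofReal (f x).toReal := by
      filter_upwards [measure_eq_zero_iff_ae_notMem.mp hm] with x hx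
      exact (ENNReal.ofReal_toReal hx).symm
    rw [lintegral_congr_ae hae]
    rw [lintegral_eq_lintegral_meas_lt μ (ae_of_all _ fun x => ENNReal.toReal_nonneg)
      hf.ennreal_toReal.aemeasurable]
    refine setLIntegral_congr_fun measurableSet_Ioi (fun t ht => ?_)
    have : {x | t < (f x).toReal} =ᵐ[μ] {x | ENNReal.ofReal t < f x} := by
      filter_upwards [measure_eq_zero_iff_ae_notMem.mp hm] with x hx
      have hfx : f x ≠ ⊤ := hx
      show (t < (f x).toReal) = (ENNReal.ofReal t < f x)
      simp only [eq_iff_iff]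
      exact (ENNReal.ofReal_lt_iff_lt_toReal (le_of_lt ht) hfx).symm
    exact measure_congr this
  · have hL : ∫⁻ x, f x ∂μ = ⊤ := by
      have h1 := mul_meas_ge_le_lintegral₀ hf.aemeasurable (μ := μ) ⊤
      have h2 : {x | (⊤:ℝ≥0∞) ≤ f x} = {x | f x = ⊤} := by
        ext x; simp [top_le_iff]
      rw [h2, ENNReal.top_mul hm] at h1
      exact top_le_iff.mp h1
    have hR : ∫⁻ t in Ioi (0:ℝ), μ {x | ENNReal.ofReal t < f x} = ⊤ := by
      have h1 : ∀ t : ℝ, μ {x | f x = ⊤} ≤ μ {x | ENNReal.ofReal t < f x} := by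
        intro t
        refine measure_mono fun x hx => ?_
        simp only [mem_setOf_eq] at hx ⊢
        rw [hx]; exact ENNReal.ofReal_lt_top
      have h2 : ∫⁻ _ in Ioi (0:ℝ), μ {x | f x = ⊤} ≤
          ∫⁻ t in Ioi (0:ℝ), μ {x | ENNReal.ofReal t < f x} :=
        lintegral_mono fun t => h1 t
      rw [setLIntegral_const, Real.volume_Ioi, ENNReal.mul_top hm] at h2
      exact top_le_iff.mp h2
    rw [hL, hR]

lemma layercake_scaled {α : Type*} [MeasurableSpace α] (μ : Measure α)
    (f : α → ℝ≥0∞) (hf : Measurable f) {a : ℝ} (ha : 0 < a) :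
    ∫⁻ t in Ioi (0:ℝ), μ {x | ENNReal.ofReal (a*t) < f x}
      = (ENNReal.ofReal a)⁻¹ * ∫⁻ x, f x ∂μ := by
  have ha0 : ENNReal.ofReal a ≠ 0 := by simp [ha, ha.le]
  have hat : ENNReal.ofReal a ≠ ⊤ := ENNReal.ofReal_ne_top
  set g : α → ℝ≥0∞ := fun x => (ENNReal.ofReal a)⁻¹ * f x with hg
  have hgm : Measurable g := hf.const_mul _
  have key : ∀ t : ℝ, {x | ENNReal.ofReal t < g x} = {x | ENNReal.ofReal (a*t) < f x} := by
    intro t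
    ext x
    simp only [hg, mem_setOf_eq]
    rw [mul_comm, ← div_eq_mul_inv,
      ENNReal.lt_div_iff_mul_lt (Or.inl ha0) (Or.inl hat),
      ← ENNReal.ofReal_mul' ha.le, mul_comm t a]
  calc ∫⁻ t in Ioi (0:ℝ), μ {x | ENNReal.ofReal (a*t) < f x}
      = ∫⁻ t in Ioi (0:ℝ), μ {x | ENNReal.ofReal t < g x} := by
        refine setLIntegral_congr_fun measurableSet_Ioi (fun t ht => ?_)
        rw [key t]
    _ = ∫⁻ x, g x ∂μ := (layercake_ennreal μ g hgm).symm
    _ = (ENNReal.ofReal a)⁻¹ * ∫⁻ x, f x ∂μ := lintegral_const_mul' _ _ (by simp [ha0])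

lemma gm_le_am {t : ℝ} (h0 : 0 < t) (h1 : t < 1) (w z : ℝ≥0∞) :
    w ^ (1 - t) * z ^ t ≤ ENNReal.ofReal (1 - t) * w + ENNReal.ofReal t * z := by
  have h1t : 0 < 1 - t := by linarith
  rcases eq_or_ne w ⊤ with hw | hw
  · have : ENNReal.ofReal (1 - t) * w = ⊤ := by
      rw [hw, ENNReal.mul_top]
      simp [h1t, h1t.le, h1]
    rw [this, top_add]
    exact le_top
  rcases eq_or_ne z ⊤ with hz | hz
  · have : ENNReal.ofReal t * z = ⊤ := by
      rw [hz, ENNReal.mul_top]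
      simp [h0, h0.le]
    rw [this, add_top]
    exact le_top
  lift w to ℝ≥0 using hw
  lift z to ℝ≥0 using hz
  have key := NNReal.geom_mean_le_arith_mean2_weighted (1 - t).toNNReal t.toNNReal w z ?_
  · have hco : ((1:ℝ) - t).toNNReal = (1 - t).toNNReal := rfl
    calc (w:ℝ≥0∞) ^ (1 - t) * (z:ℝ≥0∞) ^ t
        = ((w ^ ((1 - t).toNNReal : ℝ) * z ^ ((t.toNNReal : ℝ)) : ℝ≥0) : ℝ≥0∞) := by
          push_cast
          rw [← ENNReal.coe_rpow_of_nonneg w h1t.le, ← ENNReal.coe_rpow_of_nonneg z h0.le]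
          rw [Real.coe_toNNReal _ h1t.le, Real.coe_toNNReal _ h0.le]
      _ ≤ (((1 - t).toNNReal * w + t.toNNReal * z : ℝ≥0) : ℝ≥0∞) := by
          exact_mod_cast key
      _ = ENNReal.ofReal (1 - t) * w + ENNReal.ofReal t * z := by
          rw [ENNReal.ofReal, ENNReal.ofReal]
          push_cast
          ring
  · rw [← Real.toNNReal_add h1t.le h0.le]
    norm_num

lemma level_ineq {t : ℝ} (h0 : 0 < t) (h1 : t < 1) (A B C : Set ℝ)
    (hA : MeasurableSet A) (hB : MeasurableSet B)
    (hAne : A.Nonempty) (hBne : B.Nonempty)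
    (hsub : (1 - t) • A + t • B ⊆ C) :
    ENNReal.ofReal (1 - t) * volume A + ENNReal.ofReal t * volume B ≤ volume C := by
  have h1t : 0 < 1 - t := by linarith
  have hA' : MeasurableSet ((1 - t) • A) := hA.const_smul₀ (1 - t)
  have hB' : MeasurableSet (t • B) := hB.const_smul₀ t
  have hAne' : ((1 - t) • A).Nonempty := hAne.smul_set
  have hBne' : (t • B).Nonempty := hBne.smul_set
  have key := sumset_meas ((1-t)•A) (t•B) hA' hB' hAne' hBne'
  have hvA : volume ((1 - t) • A) = ENNReal.ofReal (1 - t) * volume A := by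
    rw [Measure.addHaar_smul]
    congr 1
    rw [Module.finrank_self]
    rw [pow_one, abs_of_pos h1t]
  have hvB : volume (t • B) = ENNReal.ofReal t * volume B := by
    rw [Measure.addHaar_smul]
    congr 1
    rw [Module.finrank_self]
    rw [pow_one, abs_of_pos h0]
  calc ENNReal.ofReal (1 - t) * volume A + ENNReal.ofReal t * volume B
      = volume ((1 - t) • A) + volume (t • B) := by rw [hvA, hvB]
    _ ≤ volume ((1 - t) • A + t • B) := key
    _ ≤ volume C := measure_mono hsub

lemma pl_dim1_sup_top {t : ℝ} (h0 : 0 < t) (h1 : t < 1)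
    (f g h : ℝ → ℝ≥0∞) (hg : Measurable g) (hh : Measurable h)
    (hyp : ∀ x y : ℝ, f x ^ (1 - t) * g y ^ t ≤ h ((1 - t) * x + t * y))
    (hMf : (⨆ x, f x) = ⊤) (hIg : ∫⁻ x, g x ≠ 0) : ∫⁻ x, h x = ⊤ := by
  have h1t : 0 < 1 - t := by linarith
  -- find a level r > 0 with positive measure for g
  have hex : ∃ r : ℝ, 0 < r ∧ volume {y | ENNReal.ofReal r < g y} ≠ 0 := by
    by_contra hcon
    push_neg at hcon
    apply hIg
    rw [layercake_ennreal volume g hg]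
    rw [setLIntegral_congr_fun measurableSet_Ioi
      (fun r (hr : r ∈ Ioi (0:ℝ)) => hcon r hr)]
    simp
  obtain ⟨r, hr, hm⟩ := hex
  set B := {y | ENNReal.ofReal r < g y} with hB
  have hBmeas : MeasurableSet B := measurableSet_lt measurable_const hg
  have hBne : B.Nonempty := nonempty_of_measure_ne_zero hm
  set m := volume B with hmdef
  -- key step : for every c > 0, a lower bound on ∫ h
  have key : ∀ c : ℝ, 0 < c →
      ENNReal.ofReal (c ^ (1 - t) * r ^ t) * (ENNReal.ofReal t * m) ≤ ∫⁻ x, h x := by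
    intro c hc
    obtain ⟨x₀, hx₀⟩ : ∃ x, ENNReal.ofReal c < f x := by
      rw [← lt_iSup_iff, hMf]
      exact ENNReal.ofReal_lt_top
    set s := ENNReal.ofReal (c ^ (1 - t) * r ^ t) with hs
    have hsub : ((1 - t) * x₀) +ᵥ (t • B) ⊆ {z | s < h z} := by
      rintro z hz
      rw [mem_vadd_set] at hz
      obtain ⟨w, hw, rfl⟩ := hz
      obtain ⟨y, hy, rfl⟩ := hw
      have hlt : s < f x₀ ^ (1 - t) * g y ^ t := by
        have hy' : ENNReal.ofReal r < g y := hy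
        have : s = ENNReal.ofReal c ^ (1 - t) * ENNReal.ofReal r ^ t := by
          rw [hs, ENNReal.ofReal_rpow_of_pos hc, ENNReal.ofReal_rpow_of_pos hr,
            ← ENNReal.ofReal_mul (by positivity)]
        rw [this]
        exact ENNReal.mul_lt_mul (ENNReal.rpow_lt_rpow hx₀ h1t)
          (ENNReal.rpow_lt_rpow hy' h0)
      exact lt_of_lt_of_le hlt (hyp x₀ y)
    have hvol : ENNReal.ofReal t * m ≤ volume {z | s < h z} := by
      have : volume (((1 - t) * x₀) +ᵥ (t • B)) = ENNReal.ofReal t * m := by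
        rw [measure_vadd, Measure.addHaar_smul, Module.finrank_self, pow_one, abs_of_pos h0]
      rw [← this]
      exact measure_mono hsub
    calc s * (ENNReal.ofReal t * m) ≤ s * volume {z | s < h z} := by
          exact mul_le_mul_right hvol s
      _ ≤ s * volume {z | s ≤ h z} := by
          have hss : {z | s < h z} ⊆ {z | s ≤ h z} := by
            intro z hz
            simp only [mem_setOf_eq] at hz ⊢
            exact le_of_lt hz
          exact mul_le_mul_right (measure_mono hss) s
      _ ≤ ∫⁻ x, h x := mul_meas_ge_le_lintegral₀ hh.aemeasurable s
  -- conclude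
  by_contra hne
  set K := (∫⁻ x, h x).toReal + 1 with hK
  have hKle : ENNReal.ofReal K ≤ ∫⁻ x, h x := by
    rcases eq_or_ne m ⊤ with hmt | hmt
    · refine le_trans le_top ?_
      have := key 1 one_pos
      rw [hmt, ENNReal.mul_top (by simp [h0, h0.le] : ENNReal.ofReal t ≠ 0),
        ENNReal.mul_top (by
          simp only [ne_eq, ENNReal.ofReal_eq_zero, not_le]
          positivity)] at this
      exact this
    · set mr := m.toReal with hmr
      have hmr0 : 0 < mr := ENNReal.toReal_pos hm hmt
      set D := r ^ t * (t * mr) with hD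
      have hD0 : 0 < D := by
        have : (0:ℝ) < r ^ t := Real.rpow_pos_of_pos hr t
        positivity
      set c := max 1 (((|K| + 1) / D) ^ (1 - t)⁻¹) with hc
      have hc0 : 0 < c := lt_of_lt_of_le one_pos (le_max_left _ _)
      have hpow : (|K| + 1) / D ≤ c ^ (1 - t) := by
        have hbase : 0 ≤ ((|K| + 1) / D) ^ (1 - t)⁻¹ := by positivity
        calc (|K| + 1) / D = (((|K| + 1) / D) ^ (1 - t)⁻¹) ^ (1 - t) :=
              (Real.rpow_inv_rpow (by positivity) (ne_of_gt h1t)).symm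
          _ ≤ c ^ (1 - t) := Real.rpow_le_rpow hbase (le_max_right _ _) h1t.le
      have hKD : K ≤ c ^ (1 - t) * D := by
        have h2 : |K| + 1 ≤ c ^ (1 - t) * D := by
          rw [div_le_iff₀ hD0] at hpow
          linarith
        have : K ≤ |K| + 1 := by
          have := le_abs_self K
          linarith
        linarith
      have := key c hc0
      have hrw : ENNReal.ofReal t * m = ENNReal.ofReal (t * mr) := by
        rw [ENNReal.ofReal_mul h0.le, hmr, ENNReal.ofReal_toReal hmt]
      rw [hrw, ← ENNReal.ofReal_mul (by positivity)] at this
      refine le_trans (ENNReal.ofReal_le_ofReal ?_) this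
      calc K ≤ c ^ (1 - t) * D := hKD
        _ = c ^ (1 - t) * r ^ t * (t * mr) := by rw [hD]; ring
  have hlt : ∫⁻ x, h x < ENNReal.ofReal K := by
    rw [ENNReal.lt_ofReal_iff_toReal_lt hne]
    linarith
  exact absurd hKle (not_le.mpr hlt)

lemma prekopa_leindler_dim1 {t : ℝ} (h0 : 0 < t) (h1 : t < 1)
    (f g h : ℝ → ℝ≥0∞) (hf : Measurable f) (hg : Measurable g) (hh : Measurable h)
    (hyp : ∀ x y : ℝ, f x ^ (1 - t) * g y ^ t ≤ h ((1 - t) * x + t * y)) :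
    (∫⁻ x, f x) ^ (1 - t) * (∫⁻ x, g x) ^ t ≤ ∫⁻ x, h x := by
  have h1t : 0 < 1 - t := by linarith
  rcases eq_or_ne (∫⁻ x, f x) 0 with hIf | hIf
  · rw [hIf, ENNReal.zero_rpow_of_pos h1t, zero_mul]
    exact zero_le
  rcases eq_or_ne (∫⁻ x, g x) 0 with hIg | hIg
  · rw [hIg, ENNReal.zero_rpow_of_pos h0, mul_zero]
    exact zero_le
  rcases eq_or_ne (⨆ x, f x) ⊤ with hMf | hMf
  · rw [pl_dim1_sup_top h0 h1 f g h hg hh hyp hMf hIg]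
    exact le_top
  rcases eq_or_ne (⨆ x, g x) ⊤ with hMg | hMg
  · have hyp' : ∀ x y : ℝ, g x ^ (1 - (1 - t)) * f y ^ (1 - t) ≤
        h ((1 - (1 - t)) * x + (1 - t) * y) := by
      intro x y
      have := hyp y x
      have e1 : (1:ℝ) - (1 - t) = t := by ring
      rw [e1, mul_comm]
      convert this using 2
      ring
    have := pl_dim1_sup_top (by linarith : (0:ℝ) < 1 - t) (by linarith : 1 - t < 1)
      g f h hf hh hyp' hMg hIf
    rw [this]
    exact le_top
  -- main case
  have hMf0 : (⨆ x, f x) ≠ 0 := by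
    intro hz
    apply hIf
    have : ∀ x, f x = 0 := ENNReal.iSup_eq_zero.mp hz
    simp [this]
  have hMg0 : (⨆ x, g x) ≠ 0 := by
    intro hz
    apply hIg
    have : ∀ x, g x = 0 := ENNReal.iSup_eq_zero.mp hz
    simp [this]
  set mf := (⨆ x, f x).toReal with hmf
  set mg := (⨆ x, g x).toReal with hmg
  have hmf0 : 0 < mf := ENNReal.toReal_pos hMf0 hMf
  have hmg0 : 0 < mg := ENNReal.toReal_pos hMg0 hMg
  have hMfr : (⨆ x, f x) = ENNReal.ofReal mf := (ENNReal.ofReal_toReal hMf).symm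
  have hMgr : (⨆ x, g x) = ENNReal.ofReal mg := (ENNReal.ofReal_toReal hMg).symm
  set c := mf ^ (1 - t) * mg ^ t with hc
  have hc0 : 0 < c := by
    have := Real.rpow_pos_of_pos hmf0 (1 - t)
    have := Real.rpow_pos_of_pos hmg0 t
    positivity
  set af := mf / c with haf
  set ag := mg / c with hag
  have haf0 : 0 < af := by positivity
  have hag0 : 0 < ag := by positivity
  -- the pointwise level bound
  have bound : ∀ r ∈ Ioo (0:ℝ) c,
      ENNReal.ofReal (1 - t) * volume {x | ENNReal.ofReal (af * r) < f x}
        + ENNReal.ofReal t * volume {y | ENNReal.ofReal (ag * r) < g y}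
      ≤ volume {z | ENNReal.ofReal r < h z} := by
    rintro r ⟨hr0, hrc⟩
    set A := {x | ENNReal.ofReal (af * r) < f x} with hA
    set B := {y | ENNReal.ofReal (ag * r) < g y} with hB
    have hAmeas : MeasurableSet A := measurableSet_lt measurable_const hf
    have hBmeas : MeasurableSet B := measurableSet_lt measurable_const hg
    have hAne : A.Nonempty := by
      have : ENNReal.ofReal (af * r) < ⨆ x, f x := by
        rw [hMfr, ENNReal.ofReal_lt_ofReal_iff hmf0]
        calc af * r = mf * (r / c) := by rw [haf]; ring
          _ < mf * 1 := by
            apply mul_lt_mul_of_pos_left _ hmf0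
            rw [div_lt_one hc0]; exact hrc
          _ = mf := mul_one mf
      obtain ⟨x, hx⟩ := lt_iSup_iff.mp this
      exact ⟨x, hx⟩
    have hBne : B.Nonempty := by
      have : ENNReal.ofReal (ag * r) < ⨆ x, g x := by
        rw [hMgr, ENNReal.ofReal_lt_ofReal_iff hmg0]
        calc ag * r = mg * (r / c) := by rw [hag]; ring
          _ < mg * 1 := by
            apply mul_lt_mul_of_pos_left _ hmg0
            rw [div_lt_one hc0]; exact hrc
          _ = mg := mul_one mg
      obtain ⟨y, hy⟩ := lt_iSup_iff.mp this
      exact ⟨y, hy⟩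
    have hsub : (1 - t) • A + t • B ⊆ {z | ENNReal.ofReal r < h z} := by
      intro z hz
      rw [mem_add] at hz
      obtain ⟨z1, hz1, z2, hz2, rfl⟩ := hz
      obtain ⟨x, hx, rfl⟩ := hz1
      obtain ⟨y, hy, rfl⟩ := hz2
      have hx' : ENNReal.ofReal (af * r) < f x := hx
      have hy' : ENNReal.ofReal (ag * r) < g y := hy
      have hkey : ENNReal.ofReal r < f x ^ (1 - t) * g y ^ t := by
        have hreal : r = (af * r) ^ (1 - t) * (ag * r) ^ t := by
          have e1 : af * r = mf * (r / c) := by rw [haf]; ring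
          have e2 : ag * r = mg * (r / c) := by rw [hag]; ring
          have hrc0 : 0 < r / c := by positivity
          rw [e1, e2, Real.mul_rpow hmf0.le hrc0.le, Real.mul_rpow hmg0.le hrc0.le]
          have : mf ^ (1 - t) * (r / c) ^ (1 - t) * (mg ^ t * (r / c) ^ t)
              = (mf ^ (1 - t) * mg ^ t) * ((r / c) ^ (1 - t) * (r / c) ^ t) := by ring
          rw [this, ← Real.rpow_add hrc0]
          norm_num
          rw [← hc, mul_div_cancel₀ r (ne_of_gt hc0)]
        calc ENNReal.ofReal r
            = ENNReal.ofReal (af * r) ^ (1 - t) * ENNReal.ofReal (ag * r) ^ t := by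
              rw [ENNReal.ofReal_rpow_of_pos (by positivity),
                ENNReal.ofReal_rpow_of_pos (by positivity),
                ← ENNReal.ofReal_mul (by positivity), ← hreal]
          _ < f x ^ (1 - t) * g y ^ t :=
              ENNReal.mul_lt_mul (ENNReal.rpow_lt_rpow hx' h1t)
                (ENNReal.rpow_lt_rpow hy' h0)
      have := hyp x y
      have hsm : (1 - t) • x + t • y = (1 - t) * x + t * y := rfl
      rw [mem_setOf_eq, hsm]
      exact lt_of_lt_of_le hkey this
    exact level_ineq h0 h1 A B _ hAmeas hBmeas hAne hBne hsub
  -- measurability of the distribution functions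
  have hantif : Antitone (fun r : ℝ => volume {x | ENNReal.ofReal (af * r) < f x}) := by
    intro r1 r2 h12
    apply measure_mono
    intro x hx
    simp only [mem_setOf_eq] at hx ⊢
    refine lt_of_le_of_lt ?_ hx
    exact ENNReal.ofReal_le_ofReal (by nlinarith)
  have hantig : Antitone (fun r : ℝ => volume {y | ENNReal.ofReal (ag * r) < g y}) := by
    intro r1 r2 h12
    apply measure_mono
    intro x hx
    simp only [mem_setOf_eq] at hx ⊢
    refine lt_of_le_of_lt ?_ hx
    exact ENNReal.ofReal_le_ofReal (by nlinarith)
  have hantih : Antitone (fun r : ℝ => volume {z | ENNReal.ofReal r < h z}) := by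
    intro r1 r2 h12
    apply measure_mono
    intro x hx
    simp only [mem_setOf_eq] at hx ⊢
    exact lt_of_le_of_lt (ENNReal.ofReal_le_ofReal h12) hx
  -- the truncated integrals equal the full ones
  have trunc : ∀ (φ : ℝ → ℝ≥0∞) (aφ : ℝ) (Fn : ℝ → ℝ≥0∞), Measurable Fn →
      (∀ r, c ≤ r → Fn r = 0) →
      ∫⁻ r in Ioo (0:ℝ) c, Fn r = ∫⁻ r in Ioi (0:ℝ), Fn r := by
    intro φ aφ Fn hFn hvan
    refine le_antisymm (lintegral_mono_set Ioo_subset_Ioi_self) ?_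
    have hsplit : Ioi (0:ℝ) ⊆ Ioo 0 c ∪ Ici c := by
      intro r hr
      rcases lt_or_ge r c with hrc | hrc
      · exact Or.inl ⟨hr, hrc⟩
      · exact Or.inr hrc
    calc ∫⁻ r in Ioi (0:ℝ), Fn r ≤ ∫⁻ r in Ioo 0 c ∪ Ici c, Fn r :=
          lintegral_mono_set hsplit
      _ ≤ (∫⁻ r in Ioo (0:ℝ) c, Fn r) + ∫⁻ r in Ici c, Fn r := lintegral_union_le _ _ _
      _ = ∫⁻ r in Ioo (0:ℝ) c, Fn r := by
          have : ∫⁻ r in Ici c, Fn r = 0 := by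
            rw [setLIntegral_congr_fun measurableSet_Ici
              (fun r (hr : r ∈ Ici c) => hvan r hr)]
            simp
          rw [this, add_zero]
  have hvanf : ∀ r, c ≤ r → volume {x | ENNReal.ofReal (af * r) < f x} = 0 := by
    intro r hr
    convert measure_empty (μ := (volume : Measure ℝ))
    rw [eq_empty_iff_forall_notMem]
    intro x hx
    simp only [mem_setOf_eq] at hx
    have hle : f x ≤ ENNReal.ofReal (af * r) := by
      calc f x ≤ ⨆ x, f x := le_iSup f x
        _ = ENNReal.ofReal mf := hMfr
        _ ≤ ENNReal.ofReal (af * r) := by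
            apply ENNReal.ofReal_le_ofReal
            calc mf = af * c := by rw [haf]; field_simp
              _ ≤ af * r := by nlinarith
    exact absurd hx (not_lt.mpr hle)
  have hvang : ∀ r, c ≤ r → volume {y | ENNReal.ofReal (ag * r) < g y} = 0 := by
    intro r hr
    convert measure_empty (μ := (volume : Measure ℝ))
    rw [eq_empty_iff_forall_notMem]
    intro y hy
    simp only [mem_setOf_eq] at hy
    have hle : g y ≤ ENNReal.ofReal (ag * r) := by
      calc g y ≤ ⨆ y, g y := le_iSup g y
        _ = ENNReal.ofReal mg := hMgr
        _ ≤ ENNReal.ofReal (ag * r) := by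
            apply ENNReal.ofReal_le_ofReal
            calc mg = ag * c := by rw [hag]; field_simp
              _ ≤ ag * r := by nlinarith
    exact absurd hy (not_lt.mpr hle)
  -- main chain
  have main : ENNReal.ofReal (1 - t) * (ENNReal.ofReal (c / mf) * ∫⁻ x, f x)
      + ENNReal.ofReal t * (ENNReal.ofReal (c / mg) * ∫⁻ x, g x) ≤ ∫⁻ x, h x := by
    have step1 : ∫⁻ x, h x = ∫⁻ r in Ioi (0:ℝ), volume {z | ENNReal.ofReal r < h z} :=
      layercake_ennreal volume h hh
    have step2 : ∫⁻ r in Ioo (0:ℝ) c,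
        (ENNReal.ofReal (1 - t) * volume {x | ENNReal.ofReal (af * r) < f x}
          + ENNReal.ofReal t * volume {y | ENNReal.ofReal (ag * r) < g y})
        ≤ ∫⁻ r in Ioo (0:ℝ) c, volume {z | ENNReal.ofReal r < h z} :=
      setLIntegral_mono hantih.measurable bound
    have step3 : ∫⁻ r in Ioo (0:ℝ) c,
        (ENNReal.ofReal (1 - t) * volume {x | ENNReal.ofReal (af * r) < f x}
          + ENNReal.ofReal t * volume {y | ENNReal.ofReal (ag * r) < g y})
        = ENNReal.ofReal (1 - t) * (ENNReal.ofReal (c / mf) * ∫⁻ x, f x)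
          + ENNReal.ofReal t * (ENNReal.ofReal (c / mg) * ∫⁻ x, g x) := by
      rw [lintegral_add_left (hantif.measurable.const_mul _)]
      rw [lintegral_const_mul' _ _ ENNReal.ofReal_ne_top,
        lintegral_const_mul' _ _ ENNReal.ofReal_ne_top]
      rw [trunc (fun _ => 0) af _ hantif.measurable hvanf,
        trunc (fun _ => 0) ag _ hantig.measurable hvang]
      have e1 : ∫⁻ r in Ioi (0:ℝ), volume {x | ENNReal.ofReal (af * r) < f x}
          = (ENNReal.ofReal af)⁻¹ * ∫⁻ x, f x := layercake_scaled volume f hf haf0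
      have e2 : ∫⁻ r in Ioi (0:ℝ), volume {y | ENNReal.ofReal (ag * r) < g y}
          = (ENNReal.ofReal ag)⁻¹ * ∫⁻ x, g x := layercake_scaled volume g hg hag0
      rw [e1, e2]
      have e3 : (ENNReal.ofReal af)⁻¹ = ENNReal.ofReal (c / mf) := by
        rw [← ENNReal.ofReal_inv_of_pos haf0, haf, inv_div]
      have e4 : (ENNReal.ofReal ag)⁻¹ = ENNReal.ofReal (c / mg) := by
        rw [← ENNReal.ofReal_inv_of_pos hag0, hag, inv_div]
      rw [e3, e4]
    calc ENNReal.ofReal (1 - t) * (ENNReal.ofReal (c / mf) * ∫⁻ x, f x)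
        + ENNReal.ofReal t * (ENNReal.ofReal (c / mg) * ∫⁻ x, g x)
        = ∫⁻ r in Ioo (0:ℝ) c,
          (ENNReal.ofReal (1 - t) * volume {x | ENNReal.ofReal (af * r) < f x}
            + ENNReal.ofReal t * volume {y | ENNReal.ofReal (ag * r) < g y}) := step3.symm
      _ ≤ ∫⁻ r in Ioo (0:ℝ) c, volume {z | ENNReal.ofReal r < h z} := step2
      _ ≤ ∫⁻ r in Ioi (0:ℝ), volume {z | ENNReal.ofReal r < h z} :=
          lintegral_mono_set Ioo_subset_Ioi_self
      _ = ∫⁻ x, h x := step1.symm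
  -- apply AM-GM
  refine le_trans ?_ (le_trans (gm_le_am h0 h1
    (ENNReal.ofReal (c / mf) * ∫⁻ x, f x) (ENNReal.ofReal (c / mg) * ∫⁻ x, g x)) main)
  rw [ENNReal.mul_rpow_of_nonneg _ _ h1t.le, ENNReal.mul_rpow_of_nonneg _ _ h0.le]
  have e5 : ENNReal.ofReal (c / mf) ^ (1 - t) * ENNReal.ofReal (c / mg) ^ t = 1 := by
    rw [ENNReal.ofReal_rpow_of_pos (by positivity), ENNReal.ofReal_rpow_of_pos (by positivity),
      ← ENNReal.ofReal_mul (by positivity)]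
    have : (c / mf) ^ (1 - t) * (c / mg) ^ t = 1 := by
      rw [Real.div_rpow hc0.le hmf0.le, Real.div_rpow hc0.le hmg0.le]
      rw [div_mul_div_comm, ← Real.rpow_add hc0]
      norm_num
      rw [← hc, div_self (ne_of_gt hc0)]
    rw [this, ENNReal.ofReal_one]
  calc (∫⁻ x, f x) ^ (1 - t) * (∫⁻ x, g x) ^ t
      = (ENNReal.ofReal (c / mf) ^ (1 - t) * ENNReal.ofReal (c / mg) ^ t)
        * ((∫⁻ x, f x) ^ (1 - t) * (∫⁻ x, g x) ^ t) := by rw [e5, one_mul]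
    _ = ENNReal.ofReal (c / mf) ^ (1 - t) * (∫⁻ x, f x) ^ (1 - t)
        * (ENNReal.ofReal (c / mg) ^ t * (∫⁻ x, g x) ^ t) := by ring
    _ ≤ _ := le_refl _

theorem prekopa_leindler_pi {n : ℕ} {t : ℝ} (h0 : 0 < t) (h1 : t < 1)
    (f g h : (Fin n → ℝ) → ℝ≥0∞) (hf : Measurable f) (hg : Measurable g)
    (hh : Measurable h)
    (hyp : ∀ x y, f x ^ (1 - t) * g y ^ t ≤ h ((1 - t) • x + t • y)) :
    (∫⁻ x, f x) ^ (1 - t) * (∫⁻ x, g x) ^ t ≤ ∫⁻ x, h x := by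
  induction n with
  | zero =>
    have huniv : volume (univ : Set (Fin 0 → ℝ)) = 1 := by
      rw [MeasureTheory.volume_pi, Measure.pi_univ]
      simp
    rw [lintegral_unique f, lintegral_unique g, lintegral_unique h, huniv,
      mul_one, mul_one, mul_one]
    convert hyp default default using 4
  | succ n IH =>
    set e := MeasurableEquiv.piFinSuccAbove (fun _ : Fin (n+1) => ℝ) 0 with he
    have vp : MeasurePreserving e volume volume :=
      volume_preserving_piFinSuccAbove (fun _ : Fin (n+1) => ℝ) 0
    have vps : MeasurePreserving e.symm volume volume := vp.symm e
    set f' : ℝ × (Fin n → ℝ) → ℝ≥0∞ := fun p => f (e.symm p) with hf'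
    set g' : ℝ × (Fin n → ℝ) → ℝ≥0∞ := fun p => g (e.symm p) with hg'
    set h' : ℝ × (Fin n → ℝ) → ℝ≥0∞ := fun p => h (e.symm p) with hh'
    have hf'm : Measurable f' := hf.comp e.symm.measurable
    have hg'm : Measurable g' := hg.comp e.symm.measurable
    have hh'm : Measurable h' := hh.comp e.symm.measurable
    have esymm_affine : ∀ p q : ℝ × (Fin n → ℝ),
        e.symm ((1 - t) • p + t • q) = (1 - t) • e.symm p + t • e.symm q := by
      intro p q
      funext i
      simp only [he, MeasurableEquiv.piFinSuccAbove_symm_apply]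
      refine Fin.cases ?_ (fun j => ?_) i
      · simp [Fin.insertNth_apply_same, Prod.smul_fst, Prod.fst_add]
      · have h0j : (0:Fin (n+1)).succAbove j = j.succ := rfl
        simp [Fin.insertNth_apply_succAbove]
    have hyp' : ∀ p q : ℝ × (Fin n → ℝ),
        f' p ^ (1 - t) * g' q ^ t ≤ h' ((1 - t) • p + t • q) := by
      intro p q
      calc f' p ^ (1 - t) * g' q ^ t
          ≤ h ((1 - t) • e.symm p + t • e.symm q) := hyp _ _
        _ = h' ((1 - t) • p + t • q) := (congrArg h (esymm_affine p q)).symm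
    set F : ℝ → ℝ≥0∞ := fun a => ∫⁻ x', f' (a, x') with hF
    set G : ℝ → ℝ≥0∞ := fun a => ∫⁻ x', g' (a, x') with hG
    set H : ℝ → ℝ≥0∞ := fun a => ∫⁻ x', h' (a, x') with hH
    have hFm : Measurable F := hf'm.lintegral_prod_right'
    have hGm : Measurable G := hg'm.lintegral_prod_right'
    have hHm : Measurable H := hh'm.lintegral_prod_right'
    have hFGH : ∀ a b : ℝ, F a ^ (1 - t) * G b ^ t ≤ H ((1 - t) * a + t * b) := by
      intro a b
      apply IH (fun x' => f' (a, x')) (fun y' => g' (b, y'))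
        (fun z' => h' ((1 - t) * a + t * b, z'))
      · exact hf'm.comp (measurable_prodMk_left)
      · exact hg'm.comp (measurable_prodMk_left)
      · exact hh'm.comp (measurable_prodMk_left)
      · intro x' y'
        have := hyp' (a, x') (b, y')
        convert this using 2
        rfl
    have key := prekopa_leindler_dim1 h0 h1 F G H hFm hGm hHm hFGH
    have eF : ∫⁻ a, F a = ∫⁻ x, f x := by
      rw [hF]
      rw [← lintegral_prod f' hf'm.aemeasurable]
      rw [← Measure.volume_eq_prod]
      exact vps.lintegral_comp hf
    have eG : ∫⁻ a, G a = ∫⁻ x, g x := by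
      rw [hG, ← lintegral_prod g' hg'm.aemeasurable, ← Measure.volume_eq_prod]
      exact vps.lintegral_comp hg
    have eH : ∫⁻ a, H a = ∫⁻ x, h x := by
      rw [hH, ← lintegral_prod h' hh'm.aemeasurable, ← Measure.volume_eq_prod]
      exact vps.lintegral_comp hh
    rwa [eF, eG, eH] at key

theorem bm_mult_pi {n : ℕ} {t : ℝ} (h0 : 0 < t) (h1 : t < 1)
    (A B : Set (Fin n → ℝ)) (hA : IsCompact A) (hB : IsCompact B) :
    volume A ^ (1 - t) * volume B ^ t ≤ volume ((1 - t) • A + t • B) := by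
  have h1t : 0 < 1 - t := by linarith
  set C := (1 - t) • A + t • B with hC
  have hCc : IsCompact C :=
    ((hA.smul (1 - t)).add (hB.smul t))
  have hf : Measurable (A.indicator (1 : (Fin n → ℝ) → ℝ≥0∞)) :=
    measurable_one.indicator hA.measurableSet
  have hg : Measurable (B.indicator (1 : (Fin n → ℝ) → ℝ≥0∞)) :=
    measurable_one.indicator hB.measurableSet
  have hh : Measurable (C.indicator (1 : (Fin n → ℝ) → ℝ≥0∞)) :=
    measurable_one.indicator hCc.measurableSet
  have hyp : ∀ x y, A.indicator (1 : (Fin n → ℝ) → ℝ≥0∞) x ^ (1 - t)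
        * B.indicator (1 : (Fin n → ℝ) → ℝ≥0∞) y ^ t ≤
      C.indicator (1 : (Fin n → ℝ) → ℝ≥0∞) ((1 - t) • x + t • y) := by
    intro x y
    by_cases hx : x ∈ A
    · by_cases hy : y ∈ B
      · have hmem : (1 - t) • x + t • y ∈ C :=
          Set.add_mem_add (smul_mem_smul_set hx) (smul_mem_smul_set hy)
        rw [indicator_of_mem hx, indicator_of_mem hy, indicator_of_mem hmem]
        simp [ENNReal.one_rpow]
      · rw [indicator_of_notMem hy]
        rw [ENNReal.zero_rpow_of_pos h0, mul_zero]
        exact zero_le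
    · rw [indicator_of_notMem hx]
      rw [ENNReal.zero_rpow_of_pos h1t, zero_mul]
      exact zero_le
  have key := prekopa_leindler_pi h0 h1 _ _ _ hf hg hh hyp
  rwa [lintegral_indicator_one hA.measurableSet,
    lintegral_indicator_one hB.measurableSet,
    lintegral_indicator_one hCc.measurableSet] at key

theorem bm_mult {n : ℕ} {t : ℝ} (h0 : 0 < t) (h1 : t < 1)
    (A B : Set (EuclideanSpace ℝ (Fin n))) (hA : IsCompact A) (hB : IsCompact B) :
    volume A ^ (1 - t) * volume B ^ t ≤ volume ((1 - t) • A + t • B) := by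
  set e := (MeasurableEquiv.toLp 2 (Fin n → ℝ)).symm with he
  have vp : MeasurePreserving e volume volume :=
    EuclideanSpace.volume_preserving_symm_measurableEquiv_toLp (Fin n)
  have vps : MeasurePreserving e.symm volume volume := vp.symm e
  have hecont : Continuous e := PiLp.continuous_ofLp 2 (fun _ : Fin n => ℝ)
  have himg : ∀ (S : Set (EuclideanSpace ℝ (Fin n))), MeasurableSet S →
      volume (e '' S) = volume S := by
    intro S hS
    rw [MeasurableEquiv.image_eq_preimage_symm]
    exact vps.measure_preimage hS.nullMeasurableSet
  have hadd : ∀ S T : Set (EuclideanSpace ℝ (Fin n)), e '' (S + T) = e '' S + e '' T := by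
    intro S T
    ext z
    simp only [mem_image, mem_add]
    constructor
    · rintro ⟨w, ⟨x, hx, y, hy, rfl⟩, rfl⟩
      exact ⟨e x, ⟨x, hx, rfl⟩, e y, ⟨y, hy, rfl⟩, rfl⟩
    · rintro ⟨u, ⟨x, hx, rfl⟩, v, ⟨y, hy, rfl⟩, rfl⟩
      exact ⟨x + y, ⟨x, hx, y, hy, rfl⟩, rfl⟩
  have hsmul : ∀ (c : ℝ) (S : Set (EuclideanSpace ℝ (Fin n))), e '' (c • S) = c • (e '' S) := by
    intro c S
    ext z
    simp only [mem_image, mem_smul_set]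
    constructor
    · rintro ⟨w, ⟨x, hx, rfl⟩, rfl⟩
      exact ⟨e x, ⟨x, hx, rfl⟩, rfl⟩
    · rintro ⟨w, ⟨x, hx, rfl⟩, rfl⟩
      exact ⟨c • x, ⟨x, hx, rfl⟩, rfl⟩
  have hA' : IsCompact (e '' A) := hA.image hecont
  have hB' : IsCompact (e '' B) := hB.image hecont
  have key := bm_mult_pi h0 h1 (e '' A) (e '' B) hA' hB'
  have hCset : (1 - t) • (e '' A) + t • (e '' B) = e '' ((1 - t) • A + t • B) := by
    rw [hadd, hsmul, hsmul]
  have hCcomp : IsCompact ((1 - t) • A + t • B) := (hA.smul (1 - t)).add (hB.smul t)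
  rw [hCset, himg _ hCcomp.measurableSet, himg _ hA.measurableSet,
    himg _ hB.measurableSet] at key
  exact key

theorem bm_add {n : ℕ} (hn : 0 < n) (K L : Set (EuclideanSpace ℝ (Fin n)))
    (hK : IsCompact K) (hL : IsCompact L) (hK0 : volume K ≠ 0) (hL0 : volume L ≠ 0) :
    (volume K).toReal ^ ((n : ℝ)⁻¹) + (volume L).toReal ^ ((n : ℝ)⁻¹)
      ≤ (volume (K + L)).toReal ^ ((n : ℝ)⁻¹) := by
  set vK := (volume K).toReal with hvK
  set vL := (volume L).toReal with hvL
  have hKfin : volume K ≠ ⊤ := hK.measure_lt_top.ne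
  have hLfin : volume L ≠ ⊤ := hL.measure_lt_top.ne
  have hvK0 : 0 < vK := ENNReal.toReal_pos hK0 hKfin
  have hvL0 : 0 < vL := ENNReal.toReal_pos hL0 hLfin
  set a := vK ^ ((n : ℝ)⁻¹) with ha
  set b := vL ^ ((n : ℝ)⁻¹) with hb
  have ha0 : 0 < a := Real.rpow_pos_of_pos hvK0 _
  have hb0 : 0 < b := Real.rpow_pos_of_pos hvL0 _
  set s := a + b with hs
  have hs0 : 0 < s := by positivity
  set t := b / s with ht
  have h0 : 0 < t := by positivity
  have h1 : t < 1 := by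
    rw [ht, div_lt_one hs0]
    linarith
  have h1t : 1 - t = a / s := by
    rw [ht, hs]
    field_simp
    ring
  have h1t0 : 0 < 1 - t := by linarith
  -- volumes as powers
  have hKa : volume K = ENNReal.ofReal (a ^ n) := by
    rw [ha, Real.rpow_inv_natCast_pow (ENNReal.toReal_nonneg) hn.ne']
    exact (ENNReal.ofReal_toReal hKfin).symm
  have hLb : volume L = ENNReal.ofReal (b ^ n) := by
    rw [hb, Real.rpow_inv_natCast_pow (ENNReal.toReal_nonneg) hn.ne']
    exact (ENNReal.ofReal_toReal hLfin).symm
  -- rescaled bodies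
  set K' := (1 - t)⁻¹ • K with hK'
  set L' := t⁻¹ • L with hL'
  have hKrec : (1 - t) • K' = K := by
    rw [hK', smul_smul, mul_inv_cancel₀ h1t0.ne', one_smul]
  have hLrec : t • L' = L := by
    rw [hL', smul_smul, mul_inv_cancel₀ h0.ne', one_smul]
  have hK'c : IsCompact K' := hK.smul _
  have hL'c : IsCompact L' := hL.smul _
  have key := bm_mult h0 h1 K' L' hK'c hL'c
  rw [hKrec, hLrec] at key
  -- compute volume K' and volume L'
  have hfr : Module.finrank ℝ (EuclideanSpace ℝ (Fin n)) = n := finrank_euclideanSpace_fin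
  have hvolK' : volume K' = ENNReal.ofReal (s ^ n) := by
    rw [hK', Measure.addHaar_smul, hfr, hKa, ← ENNReal.ofReal_mul (by positivity)]
    congr 1
    rw [abs_of_pos (by positivity : (0:ℝ) < (1 - t)⁻¹ ^ n)]
    rw [h1t, ← mul_pow]
    congr 1
    field_simp
  have hvolL' : volume L' = ENNReal.ofReal (s ^ n) := by
    rw [hL', Measure.addHaar_smul, hfr, hLb, ← ENNReal.ofReal_mul (by positivity)]
    congr 1
    rw [abs_of_pos (by positivity : (0:ℝ) < t⁻¹ ^ n)]
    rw [ht, ← mul_pow]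
    congr 1
    field_simp
  rw [hvolK', hvolL'] at key
  have hcomb : ENNReal.ofReal (s ^ n) ^ (1 - t) * ENNReal.ofReal (s ^ n) ^ t
      = ENNReal.ofReal (s ^ n) := by
    rw [← ENNReal.rpow_add _ _ (by simp [ENNReal.ofReal_eq_zero]; positivity) ENNReal.ofReal_ne_top]
    norm_num
  rw [hcomb] at key
  -- conclude
  have hKLfin : volume (K + L) ≠ ⊤ := (hK.add hL).measure_lt_top.ne
  have htr : s ^ n ≤ (volume (K + L)).toReal := by
    have := ENNReal.toReal_mono hKLfin key
    rwa [ENNReal.toReal_ofReal (by positivity)] at this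
  calc a + b = ((s : ℝ) ^ n) ^ ((n : ℝ)⁻¹) := by
        rw [Real.pow_rpow_inv_natCast hs0.le hn.ne']
    _ ≤ (volume (K + L)).toReal ^ ((n : ℝ)⁻¹) :=
        Real.rpow_le_rpow (by positivity) htr (by positivity)

theorem convBody_BrunnMinkowski (n : ℕ) (K L : Set (EuclideanSpace ℝ (Fin n)))
    (hK : IsCompact K) (hKc : Convex ℝ K) (hKi : (interior K).Nonempty)
    (hL : IsCompact L) (hLc : Convex ℝ L) (hLi : (interior L).Nonempty)
    (θ : ℝ) (hθ : θ ∈ Set.Icc (0 : ℝ) 1) :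
    (volume (convBody n θ K L)).toReal ^ ((n : ℝ)⁻¹) ≥
      (1 - θ ^ ((n : ℝ)⁻¹)) *
        ((volume K).toReal ^ ((n : ℝ)⁻¹) + (volume L).toReal ^ ((n : ℝ)⁻¹)) := by
  obtain ⟨hθ0, hθ1⟩ := hθ
  rcases Nat.eq_zero_or_pos n with hn | hn
  · subst hn
    simp only [Nat.cast_zero, inv_zero, Real.rpow_zero]
    norm_num
  rw [ge_iff_le]
  rcases eq_or_lt_of_le hθ1 with hθe | hθlt
  · subst hθe
    rw [Real.one_rpow, sub_self, zero_mul]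
    exact Real.rpow_nonneg ENNReal.toReal_nonneg _
  -- now 0 ≤ θ < 1, n ≥ 1
  set lam := θ ^ ((n : ℝ)⁻¹) with hlam
  have hlam0 : 0 ≤ lam := Real.rpow_nonneg hθ0 _
  have hlam1 : lam < 1 := by
    rcases eq_or_lt_of_le hθ0 with hθz | hθpos
    · rw [hlam, ← hθz, Real.zero_rpow (by positivity : ((n:ℝ)⁻¹) ≠ 0)]
      norm_num
    · exact Real.rpow_lt_one hθ0 hθlt (by positivity)
  set M := ⨆ z : EuclideanSpace ℝ (Fin n), volume (K ∩ ({z} - L)) with hM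
  have hMle : M ≤ volume K := iSup_le fun z => measure_mono inter_subset_left
  have hMfin : M ≠ ⊤ := (lt_of_le_of_lt hMle hK.measure_lt_top).ne
  -- positivity of M and of the volumes of K and L
  obtain ⟨x₀, hx₀⟩ := hKi
  obtain ⟨r1, hr1, hball1⟩ := Metric.mem_nhds_iff.mp (mem_interior_iff_mem_nhds.mp hx₀)
  obtain ⟨y₀, hy₀⟩ := hLi
  obtain ⟨r2, hr2, hball2⟩ := Metric.mem_nhds_iff.mp (mem_interior_iff_mem_nhds.mp hy₀)
  have hball1K : Metric.ball x₀ r1 ⊆ K := hball1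
  have hball2L : Metric.ball y₀ r2 ⊆ L := hball2
  have hK0 : volume K ≠ 0 := by
    intro hzero
    have h1 : volume (Metric.ball x₀ r1) ≤ volume K := measure_mono hball1K
    rw [hzero] at h1
    exact absurd h1 (not_le.mpr (Metric.measure_ball_pos volume x₀ hr1))
  have hL0 : volume L ≠ 0 := by
    intro hzero
    have h1 : volume (Metric.ball y₀ r2) ≤ volume L := measure_mono hball2L
    rw [hzero] at h1
    exact absurd h1 (not_le.mpr (Metric.measure_ball_pos volume y₀ hr2))
  have hM0 : M ≠ 0 := by
    set r := min r1 r2 with hr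
    have hr0 : 0 < r := lt_min hr1 hr2
    have hsub : Metric.ball x₀ r ⊆ K ∩ ({x₀ + y₀} - L) := by
      intro z hz
      have hzK : z ∈ K := hball1K (Metric.ball_subset_ball (min_le_left _ _) hz)
      refine ⟨hzK, ?_⟩
      rw [mem_sub]
      refine ⟨x₀ + y₀, rfl, x₀ + y₀ - z, ?_, by abel⟩
      apply hball2L
      rw [Metric.mem_ball]
      have hd : dist (x₀ + y₀ - z) y₀ = dist x₀ z := by
        rw [dist_eq_norm, dist_eq_norm]
        congr 1
        abel
      rw [hd, dist_comm]
      rw [Metric.mem_ball] at hz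
      exact lt_of_lt_of_le hz (min_le_right r1 r2)
    intro hzero
    have h1 : volume (K ∩ ({x₀ + y₀} - L)) ≤ M := by
      rw [hM]
      exact le_iSup (fun z => volume (K ∩ ({z} - L))) (x₀ + y₀)
    rw [hzero] at h1
    exact absurd (le_trans (measure_mono hsub) h1)
      (not_le.mpr (Metric.measure_ball_pos volume x₀ hr0))
  have hfr : Module.finrank ℝ (EuclideanSpace ℝ (Fin n)) = n := finrank_euclideanSpace_fin
  have hKL : IsCompact (K + L) := hK.add hL
  have hKLconv : Convex ℝ (K + L) := hKc.add hLc
  have hCBfin : volume (convBody n θ K L) ≠ ⊤ := by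
    refine (lt_of_le_of_lt (measure_mono ?_) hKL.measure_lt_top).ne
    exact fun x hx => hx.1
  set Vc := (volume (convBody n θ K L)).toReal with hVc
  set c := (volume K).toReal ^ ((n : ℝ)⁻¹) + (volume L).toReal ^ ((n : ℝ)⁻¹) with hc
  have hc0 : 0 ≤ c := by positivity
  -- the key estimate for every l' strictly between lam and 1
  have key : ∀ l' : ℝ, lam < l' → l' < 1 → (1 - l') * c ≤ Vc ^ ((n : ℝ)⁻¹) := by
    intro l' hl1 hl2
    have hl'0 : 0 < l' := lt_of_le_of_lt hlam0 hl1
    have h1l' : 0 < 1 - l' := by linarith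
    have hθln : θ < l' ^ n := by
      have : lam ^ n < l' ^ n := pow_lt_pow_left₀ hl1 hlam0 hn.ne'
      rwa [hlam, Real.rpow_inv_natCast_pow hθ0 hn.ne'] at this
    have hln0 : (0:ℝ) < l' ^ n := by positivity
    -- pick an approximate maximizer z₀
    have hβ : ENNReal.ofReal θ / ENNReal.ofReal (l' ^ n) * M < M := by
      rcases eq_or_ne (ENNReal.ofReal θ) 0 with hz | hz
      · rw [hz, ENNReal.zero_div, zero_mul]
        exact pos_iff_ne_zero.mpr hM0
      · have hlt1 : ENNReal.ofReal θ / ENNReal.ofReal (l' ^ n) < 1 := by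
          rw [ENNReal.div_lt_iff (Or.inl (by simp [hln0, hln0.le]))
            (Or.inl ENNReal.ofReal_ne_top), one_mul]
          exact ENNReal.ofReal_lt_ofReal_iff hln0 |>.mpr hθln
        calc ENNReal.ofReal θ / ENNReal.ofReal (l' ^ n) * M < 1 * M := by
              exact ENNReal.mul_lt_mul_left hM0 hMfin hlt1
          _ = M := one_mul M
    obtain ⟨z₀, hz₀⟩ := lt_iSup_iff.mp (lt_of_lt_of_le hβ (le_of_eq hM))
    set f0 := volume (K ∩ ({z₀} - L)) with hf0
    have hf0pos : f0 ≠ 0 := by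
      intro hzero
      rw [hzero] at hz₀
      exact absurd hz₀ (not_lt.mpr zero_le)
    have hθM : ENNReal.ofReal θ * M ≤ ENNReal.ofReal (l' ^ n) * f0 := by
      have h1 : ENNReal.ofReal θ / ENNReal.ofReal (l' ^ n) * M * ENNReal.ofReal (l' ^ n)
          = ENNReal.ofReal θ * M := by
        rw [mul_comm (ENNReal.ofReal θ / ENNReal.ofReal (l' ^ n)) M, mul_assoc,
          ENNReal.div_mul_cancel (by simp [hln0, hln0.le]) ENNReal.ofReal_ne_top,
          mul_comm]
      calc ENNReal.ofReal θ * M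
          = ENNReal.ofReal θ / ENNReal.ofReal (l' ^ n) * M * ENNReal.ofReal (l' ^ n) := h1.symm
        _ ≤ f0 * ENNReal.ofReal (l' ^ n) := mul_le_mul_left hz₀.le _
        _ = ENNReal.ofReal (l' ^ n) * f0 := mul_comm _ _
    have hz₀KL : z₀ ∈ K + L := by
      obtain ⟨w, hwK, hwL⟩ := nonempty_of_measure_ne_zero hf0pos
      rw [mem_sub] at hwL
      obtain ⟨u, hu, v, hv, huv⟩ := hwL
      rw [mem_singleton_iff] at hu
      have hze : z₀ = w + v := by rw [← huv, hu]; abel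
      rw [hze]
      exact add_mem_add hwK hv
    -- the affine image of K + L sits inside the convolution body
    have hsub : (l' • z₀) +ᵥ ((1 - l') • (K + L)) ⊆ convBody n θ K L := by
      intro w hw
      rw [mem_vadd_set] at hw
      obtain ⟨w1, hw1, rfl⟩ := hw
      obtain ⟨y, hy, rfl⟩ := hw1
      set w := l' • z₀ +ᵥ (1 - l') • y with hwdef
      have hwKL : w ∈ K + L := by
        have h2 : w = (1 - l') • y + l' • z₀ := by rw [hwdef, vadd_eq_add]; abel
        rw [h2]
        exact hKLconv hy hz₀KL (by linarith : (0:ℝ) ≤ 1 - l') hl'0.le (by ring)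
      refine ⟨hwKL, ?_⟩
      -- the inner translated rescaled slice
      obtain ⟨k, l, hk, hl, hkl⟩ : ∃ k l, k ∈ K ∧ l ∈ L ∧ k + l = y := by
        rw [mem_add] at hy
        obtain ⟨k, hk, l, hl, hkl⟩ := hy
        exact ⟨k, l, hk, hl, hkl⟩
      have hw'K : k ∈ K ∩ ({y} - L) := by
        refine ⟨hk, ?_⟩
        rw [mem_sub]
        exact ⟨y, rfl, l, hl, by rw [← hkl]; abel⟩
      have hinner : ((1 - l') • k) +ᵥ (l' • (K ∩ ({z₀} - L))) ⊆ K ∩ ({w} - L) := by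
        intro v hv
        rw [mem_vadd_set] at hv
        obtain ⟨v1, hv1, rfl⟩ := hv
        obtain ⟨u, hu, rfl⟩ := hv1
        obtain ⟨huK, huL⟩ := hu
        rw [mem_sub] at huL
        obtain ⟨z₀', hz₀', l₂, hl₂, hl₂e⟩ := huL
        rw [mem_singleton_iff] at hz₀'
        subst hz₀'
        constructor
        · have := hKc hk huK (by linarith : (0:ℝ) ≤ 1 - l') hl'0.le (by ring)
          rwa [vadd_eq_add]
        · rw [mem_sub]
          refine ⟨w, rfl, l' • l₂ + (1 - l') • l, ?_, ?_⟩
          · exact hLc hl₂ hl hl'0.le (by linarith) (by ring)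
          · rw [hwdef, vadd_eq_add, vadd_eq_add, ← hl₂e]
            have : k = y - l := by rw [← hkl]; abel
            rw [this]
            module
      have hvolS : volume (((1 - l') • k) +ᵥ (l' • (K ∩ ({z₀} - L))))
          = ENNReal.ofReal (l' ^ n) * f0 := by
        rw [measure_vadd, Measure.addHaar_smul, hfr, abs_of_pos (by positivity), hf0]
      calc ENNReal.ofReal θ * M ≤ ENNReal.ofReal (l' ^ n) * f0 := hθM
        _ = volume (((1 - l') • k) +ᵥ (l' • (K ∩ ({z₀} - L)))) := hvolS.symm
        _ ≤ volume (K ∩ ({w} - L)) := measure_mono hinner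
    -- volume estimate
    have hvolT : volume ((l' • z₀) +ᵥ ((1 - l') • (K + L)))
        = ENNReal.ofReal ((1 - l') ^ n) * volume (K + L) := by
      rw [measure_vadd, Measure.addHaar_smul, hfr, abs_of_pos (by positivity)]
    have hvol : ENNReal.ofReal ((1 - l') ^ n) * volume (K + L)
        ≤ volume (convBody n θ K L) := by
      rw [← hvolT]
      exact measure_mono hsub
    have htoReal : (1 - l') ^ n * (volume (K + L)).toReal ≤ Vc := by
      have := ENNReal.toReal_mono hCBfin hvol
      rwa [ENNReal.toReal_mul, ENNReal.toReal_ofReal (by positivity)] at this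
    have hrpow : ((1 - l') ^ n * (volume (K + L)).toReal) ^ ((n : ℝ)⁻¹)
        ≤ Vc ^ ((n : ℝ)⁻¹) :=
      Real.rpow_le_rpow (by positivity) htoReal (by positivity)
    have hsplit : ((1 - l') ^ n * (volume (K + L)).toReal) ^ ((n : ℝ)⁻¹)
        = (1 - l') * (volume (K + L)).toReal ^ ((n : ℝ)⁻¹) := by
      rw [Real.mul_rpow (by positivity) ENNReal.toReal_nonneg,
        Real.pow_rpow_inv_natCast h1l'.le hn.ne']
    have hbm : c ≤ (volume (K + L)).toReal ^ ((n : ℝ)⁻¹) :=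
      bm_add hn K L hK hL hK0 hL0
    calc (1 - l') * c ≤ (1 - l') * (volume (K + L)).toReal ^ ((n : ℝ)⁻¹) :=
          mul_le_mul_of_nonneg_left hbm h1l'.le
      _ = ((1 - l') ^ n * (volume (K + L)).toReal) ^ ((n : ℝ)⁻¹) := hsplit.symm
      _ ≤ Vc ^ ((n : ℝ)⁻¹) := hrpow
  -- pass to the limit l' → lam
  by_contra hcon
  push_neg at hcon
  have hVc0 : 0 ≤ Vc ^ ((n : ℝ)⁻¹) := Real.rpow_nonneg ENNReal.toReal_nonneg _
  have hcpos : 0 < c := by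
    rcases eq_or_lt_of_le hc0 with hce | hcp
    · rw [← hce, mul_zero] at hcon
      exact absurd hVc0 (not_le.mpr hcon)
    · exact hcp
  have hlt : lam < 1 - Vc ^ ((n : ℝ)⁻¹) / c := by
    have h4 : Vc ^ ((n : ℝ)⁻¹) / c < 1 - lam := by
      rw [div_lt_iff₀ hcpos]
      linarith [hcon]
    linarith
  obtain ⟨l', hl1, hl2⟩ := exists_between hlt
  have hl2' : l' < 1 := by
    have : Vc ^ ((n : ℝ)⁻¹) / c ≥ 0 := by positivity
    linarith
  have hkey := key l' hl1 hl2'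
  have hfin : Vc ^ ((n : ℝ)⁻¹) < (1 - l') * c := by
    have h3 : Vc ^ ((n : ℝ)⁻¹) / c < 1 - l' := by linarith
    rw [div_lt_iff₀ hcpos] at h3
    linarith
  exact absurd hkey (not_le.mpr hfin)
end

section
/- For convex bodies K, L in ℝⁿ and θ ∈ [0,1], |K +_θ L| ≥ (1 - θ^{1/n})ⁿ |K + L|. -/
open MeasureTheory Set
open scoped Pointwise ENNReal

theorem convBody_volume_lower_bound (n : ℕ) (K L : Set (EuclideanSpace ℝ (Fin n)))
    (hK : IsCompact K) (hKc : Convex ℝ K) (hKi : (interior K).Nonempty)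
    (hL : IsCompact L) (hLc : Convex ℝ L) (hLi : (interior L).Nonempty)
    (θ : ℝ) (hθ : θ ∈ Set.Icc (0 : ℝ) 1) :
    (volume (convBody n θ K L)).toReal ≥
      (1 - θ ^ ((n : ℝ)⁻¹)) ^ n * (volume (K + L)).toReal := by
  obtain ⟨hθ0, hθ1⟩ := hθ
  set M : ℝ≥0∞ := ⨆ z : EuclideanSpace ℝ (Fin n), volume (K ∩ ({z} - L)) with hM
  set t : ℝ := θ ^ ((n : ℝ)⁻¹) with htdef
  have ht0 : 0 ≤ t := Real.rpow_nonneg hθ0 _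
  have ht1 : t ≤ 1 := Real.rpow_le_one hθ0 hθ1 (by positivity)
  have hV : volume (K + L) ≠ ⊤ := (hK.add hL).measure_lt_top.ne
  have hCsub : convBody n θ K L ⊆ K + L := fun x hx => hx.1
  have hCtop : volume (convBody n θ K L) ≠ ⊤ :=
    ((measure_mono hCsub).trans_lt (hK.add hL).measure_lt_top).ne
  -- the easy case: `convBody n θ K L = K + L`
  have easy : convBody n θ K L = K + L →
      (volume (convBody n θ K L)).toReal ≥ (1 - t) ^ n * (volume (K + L)).toReal := by
    intro hEq
    rw [hEq]
    exact mul_le_of_le_one_left ENNReal.toReal_nonneg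
      (pow_le_one₀ (by linarith) (by linarith))
  -- case n = 0
  rcases Nat.eq_zero_or_pos n with hn | hn
  · subst hn
    haveI : Subsingleton (EuclideanSpace ℝ (Fin 0)) :=
      ⟨fun a b => by ext i; exact absurd i.2 (Nat.not_lt_zero _)⟩
    apply easy
    refine Subset.antisymm hCsub fun x hx => ⟨hx, ?_⟩
    have hKuniv : K = univ :=
      eq_univ_of_forall fun y => (Subsingleton.elim _ y) ▸ (hKi.mono interior_subset).choose_spec
    have hsub : ∀ z : EuclideanSpace ℝ (Fin 0), K ∩ ({z} - L) = univ := by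
      intro z
      obtain ⟨l, hl⟩ := hLi.mono interior_subset
      refine eq_univ_of_forall fun y => ⟨hKuniv ▸ mem_univ y, ?_⟩
      have : z - l ∈ ({z} : Set _) - L := ⟨z, rfl, l, hl, rfl⟩
      exact (Subsingleton.elim _ y) ▸ this
    simp only [hsub, iSup_const]
    calc ENNReal.ofReal θ * volume (univ : Set (EuclideanSpace ℝ (Fin 0)))
        ≤ 1 * volume (univ : Set (EuclideanSpace ℝ (Fin 0))) :=
          mul_le_mul_left (ENNReal.ofReal_le_one.2 hθ1) _
      _ = volume (univ : Set (EuclideanSpace ℝ (Fin 0))) := one_mul _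
  have hn0 : n ≠ 0 := hn.ne'
  -- case θ = 0
  rcases eq_or_lt_of_le hθ0 with hθ0' | hθ0'
  · apply easy
    refine Subset.antisymm hCsub fun x hx => ⟨hx, ?_⟩
    rw [← hθ0']
    simp
  -- case M = 0
  rcases eq_or_ne M 0 with hM0 | hM0
  · apply easy
    refine Subset.antisymm hCsub fun x hx => ⟨hx, ?_⟩
    rw [← hM, hM0, mul_zero]
    exact zero_le
  have ht0' : 0 < t := Real.rpow_pos_of_pos hθ0' _
  have htn : t ^ n = θ := Real.rpow_inv_natCast_pow hθ0 hn0
  have hMtop : M ≠ ⊤ := by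
    have hle : M ≤ volume K := iSup_le fun z => measure_mono inter_subset_left
    exact (hle.trans_lt hK.measure_lt_top).ne
  -- case t = 1
  rcases eq_or_lt_of_le ht1 with ht1' | ht1'
  · rw [← ht1', sub_self, zero_pow hn0, zero_mul]
    exact ENNReal.toReal_nonneg
  -- main case: the key estimate for μ ∈ (t, 1)
  have key : ∀ μ : ℝ, t < μ → μ < 1 →
      ENNReal.ofReal ((1 - μ) ^ n) * volume (K + L) ≤ volume (convBody n θ K L) := by
    intro μ hμt hμ1
    have hμ0 : 0 < μ := ht0'.trans hμt
    have hθμ : θ < μ ^ n := by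
      rw [← htn]
      exact pow_lt_pow_left₀ hμt ht0 hn0
    -- choose a good z₀
    have hsup : ENNReal.ofReal θ * M <
        ⨆ z : EuclideanSpace ℝ (Fin n), ENNReal.ofReal (μ ^ n) * volume (K ∩ ({z} - L)) := by
      rw [← ENNReal.mul_iSup, ← hM]
      calc ENNReal.ofReal θ * M < ENNReal.ofReal (μ ^ n) * M := by
            rw [mul_comm (ENNReal.ofReal θ), mul_comm (ENNReal.ofReal (μ ^ n))]
            exact ENNReal.mul_right_strictMono hM0 hMtop
              ((ENNReal.ofReal_lt_ofReal_iff_of_nonneg hθ0).2 hθμ)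
        _ = _ := rfl
    obtain ⟨z₀, hz₀⟩ := lt_iSup_iff.mp hsup
    have hS0 : volume (K ∩ ({z₀} - L)) ≠ 0 := by
      intro h
      rw [h, mul_zero] at hz₀
      exact (not_lt.2 zero_le) hz₀
    obtain ⟨k₀, hk₀K, hk₀S⟩ := nonempty_of_measure_ne_zero hS0
    obtain ⟨z', hz', l₀, hl₀, hzl⟩ := hk₀S
    rw [mem_singleton_iff] at hz'
    rw [hz'] at hzl
    have hzl' : z₀ - l₀ = k₀ := hzl
    have hz₀mem : z₀ ∈ K + L := ⟨k₀, hk₀K, l₀, hl₀, by rw [← hzl']; module⟩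
    have hsubset : (μ • z₀) +ᵥ ((1 - μ) • (K + L)) ⊆ convBody n θ K L := by
      rintro y ⟨w, ⟨x, hx, rfl⟩, rfl⟩
      have hxmem : x ∈ K + L := hx
      obtain ⟨k, hk, l, hl, hkl⟩ := hx
      have hkl' : k + l = x := hkl
      refine ⟨(hKc.add hLc) hz₀mem hxmem hμ0.le (by linarith) (by ring), ?_⟩
      have hasub : ((1 - μ) • k) +ᵥ (μ • (K ∩ ({z₀} - L))) ⊆
          K ∩ ({(μ • z₀) +ᵥ ((1 - μ) • x)} - L) := by
        rintro p ⟨q, ⟨b, hb, rfl⟩, rfl⟩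
        obtain ⟨hbK, hbS⟩ := hb
        obtain ⟨z'', hz'', lb, hlb, hblb⟩ := hbS
        rw [mem_singleton_iff] at hz''
        rw [hz''] at hblb
        have hblb' : z₀ - lb = b := hblb
        refine ⟨hKc hk hbK (by linarith) hμ0.le (by ring), ?_⟩
        refine ⟨(μ • z₀) +ᵥ ((1 - μ) • x), rfl,
          (1 - μ) • l + μ • lb, hLc hl hlb (by linarith) hμ0.le (by ring), ?_⟩
        show (μ • z₀ + (1 - μ) • x) - ((1 - μ) • l + μ • lb) = (1 - μ) • k + μ • b
        rw [← hkl', ← hblb']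
        module
      refine le_trans ?_ (measure_mono hasub)
      rw [← hM]
      calc ENNReal.ofReal θ * M
          ≤ ENNReal.ofReal (μ ^ n) * volume (K ∩ ({z₀} - L)) := hz₀.le
        _ = volume (((1 - μ) • k) +ᵥ (μ • (K ∩ ({z₀} - L)))) := by
            rw [measure_vadd (μ := volume),
              Measure.addHaar_smul_of_nonneg volume hμ0.le, finrank_euclideanSpace_fin]
    calc ENNReal.ofReal ((1 - μ) ^ n) * volume (K + L)
        = volume ((μ • z₀) +ᵥ ((1 - μ) • (K + L))) := by
          rw [measure_vadd (μ := volume),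
            Measure.addHaar_smul_of_nonneg volume (by linarith), finrank_euclideanSpace_fin]
      _ ≤ volume (convBody n θ K L) := measure_mono hsubset
  have hfin : ∀ μ : ℝ, t < μ → μ < 1 →
      (1 - μ) ^ n * (volume (K + L)).toReal ≤ (volume (convBody n θ K L)).toReal := by
    intro μ h1 h2
    have h := ENNReal.toReal_mono hCtop (key μ h1 h2)
    rwa [ENNReal.toReal_mul, ENNReal.toReal_ofReal (pow_nonneg (by linarith) n)] at h
  have htend : Filter.Tendsto (fun μ : ℝ => (1 - μ) ^ n * (volume (K + L)).toReal)
      (nhdsWithin t (Set.Ioi t)) (nhds ((1 - t) ^ n * (volume (K + L)).toReal)) :=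
    (Continuous.tendsto (by continuity) t).mono_left nhdsWithin_le_nhds
  have hev : ∀ᶠ μ in nhdsWithin t (Set.Ioi t),
      (1 - μ) ^ n * (volume (K + L)).toReal ≤ (volume (convBody n θ K L)).toReal := by
    filter_upwards [Ioo_mem_nhdsGT_of_mem ⟨le_refl t, ht1'⟩] with μ hμ
    exact hfin μ hμ.1 hμ.2
  exact le_of_tendsto htend hev
end

section
/- Let K, L be convex bodies in ℝⁿ with M(K,L) = |K ∩ (-L)|. If a ∈ K and b ∈ L, then a + (1 - ‖a‖_K)K ∩ (1 - ‖b‖_L)(-L) ⊆ K ∩ (a + b - L), and consequently |K ∩ (a + b - L)| ≥ |(1 - ‖a‖_K)K ∩ (1 - ‖b‖_L)(-L)|. -/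
open MeasureTheory Set Filter
open scoped Pointwise

lemma aux_gauge_mem {E : Type*} [NormedAddCommGroup E] [NormedSpace ℝ E]
    {K : Set E} (hK : IsClosed K) (hKc : Convex ℝ K) (hK0 : (0 : E) ∈ K)
    {a : E} (ha : a ∈ K) {k : E} (hk : k ∈ K) :
    a + (1 - gauge K a) • k ∈ K := by
  set t := gauge K a with htdef
  have ht1 : t ≤ 1 := gauge_le_one_of_mem ha
  have ht0 : 0 ≤ t := gauge_nonneg a
  have key : ∀ s : ℝ, t < s → s ≤ 1 → a + (1 - s) • k ∈ K := by
    intro s hts hs1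
    have hSne : ({r : ℝ | 0 < r ∧ a ∈ r • K}).Nonempty :=
      ⟨1, one_pos, by simpa using ha⟩
    have hSbdd : BddBelow {r : ℝ | 0 < r ∧ a ∈ r • K} :=
      ⟨0, fun r hr => hr.1.le⟩
    obtain ⟨r, ⟨hr0, hrK⟩, hrs⟩ := (csInf_lt_iff hSbdd hSne).mp hts
    have hs0 : 0 < s := lt_of_le_of_lt ht0 hts
    have hra : r⁻¹ • a ∈ K := by
      rwa [← mem_smul_set_iff_inv_smul_mem₀ hr0.ne']
    have hsa : s⁻¹ • a ∈ K := by
      have hcomb : s⁻¹ • a = (r / s) • (r⁻¹ • a) + (1 - r / s) • (0 : E) := by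
        rw [smul_zero, add_zero, smul_smul]
        congr 1
        field_simp
      rw [hcomb]
      refine hKc hra hK0 (by positivity) ?_ (by ring)
      have : r / s ≤ 1 := (div_le_one hs0).mpr hrs.le
      linarith
    have := hKc hsa hk (a := s) (b := 1 - s) hs0.le (by linarith) (by ring)
    rwa [smul_smul, mul_inv_cancel₀ hs0.ne', one_smul] at this
  rcases eq_or_lt_of_le ht1 with h1 | h1
  · simp [← h1, ha]
  · have hcont : Tendsto (fun s : ℝ => a + (1 - s) • k) (nhdsWithin t (Set.Ioi t))
        (nhds (a + (1 - t) • k)) := by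
      apply tendsto_nhdsWithin_of_tendsto_nhds
      have hc : Continuous fun s : ℝ => a + (1 - s) • k := by fun_prop
      exact hc.tendsto t
    refine hK.mem_of_tendsto hcont ?_
    filter_upwards [Ioo_mem_nhdsGT_of_mem ⟨le_refl t, h1⟩] with s hs
    exact key s hs.1 hs.2.le

theorem gauge_intersection_inclusion (n : ℕ) (K L : Set (EuclideanSpace ℝ (Fin n)))
    (hK : IsCompact K) (hKc : Convex ℝ K) (hKi : (interior K).Nonempty) (hK0 : (0 : EuclideanSpace ℝ (Fin n)) ∈ K)
    (hL : IsCompact L) (hLc : Convex ℝ L) (hLi : (interior L).Nonempty) (hL0 : (0 : EuclideanSpace ℝ (Fin n)) ∈ L)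
    (hM : (⨆ z : EuclideanSpace ℝ (Fin n), volume (K ∩ ({z} - L))) = volume (K ∩ (-L)))
    (a b : EuclideanSpace ℝ (Fin n)) (ha : a ∈ K) (hb : b ∈ L) :
    ((fun y => a + y) '' ((1 - gauge K a) • K ∩ (1 - gauge L b) • (-L)) ⊆
        K ∩ ({a + b} - L)) ∧
      volume (K ∩ ({a + b} - L)) ≥
        volume ((1 - gauge K a) • K ∩ (1 - gauge L b) • (-L)) := by
  have hsub : (fun y => a + y) '' ((1 - gauge K a) • K ∩ (1 - gauge L b) • (-L)) ⊆
      K ∩ ({a + b} - L) := by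
    rintro _ ⟨y, ⟨hy1, hy2⟩, rfl⟩
    obtain ⟨k, hk, rfl⟩ := hy1
    obtain ⟨m, hm, hym⟩ := hy2
    obtain ⟨l, hl, rfl⟩ : ∃ l ∈ L, -l = m := by
      simpa [Set.mem_neg] using ⟨-m, by simpa using hm, by simp⟩
    constructor
    · exact aux_gauge_mem hK.isClosed hKc hK0 ha hk
    · have hbl : b + (1 - gauge L b) • l ∈ L := aux_gauge_mem hL.isClosed hLc hL0 hb hl
      refine ⟨a + b, rfl, b + (1 - gauge L b) • l, hbl, ?_⟩
      rw [← hym]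
      simp only [smul_neg]
      abel
  refine ⟨hsub, ?_⟩
  calc volume ((1 - gauge K a) • K ∩ (1 - gauge L b) • (-L))
      = volume ((fun y => a + y) '' ((1 - gauge K a) • K ∩ (1 - gauge L b) • (-L))) := by
        rw [show (fun y => a + y) '' ((1 - gauge K a) • K ∩ (1 - gauge L b) • (-L)) =
            a +ᵥ ((1 - gauge K a) • K ∩ (1 - gauge L b) • (-L)) from rfl,
          measure_vadd]
    _ ≤ volume (K ∩ ({a + b} - L)) := measure_mono hsub
end

section
/- Let K, L be convex bodies in ℝⁿ with M(K,L) = |K ∩ (-L)|. Then ∫₀¹ |K +_θ L| dθ = |K|·|L| / M(K,L). -/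
open MeasureTheory Set
open scoped Pointwise ENNReal NNReal

lemma convAux_inter_sub_eq {n : ℕ} (K L : Set (EuclideanSpace ℝ (Fin n)))
    (x : EuclideanSpace ℝ (Fin n)) :
    K ∩ ({x} - L) = K ∩ ((fun y => x - y) ⁻¹' L) := by
  ext y
  simp only [mem_inter_iff, mem_preimage, and_congr_right_iff]
  intro _
  constructor
  · rintro h
    obtain ⟨a, ha, b, hb, hab⟩ := Set.mem_sub.1 h
    rcases Set.mem_singleton_iff.1 ha with rfl
    have : a - y = b := by rw [← hab]; abel
    rwa [this]
  · intro h
    exact Set.mem_sub.2 ⟨x, rfl, x - y, h, by abel⟩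

lemma convAux_vol_eq {n : ℕ} {K L : Set (EuclideanSpace ℝ (Fin n))}
    (hK : MeasurableSet K) (hL : MeasurableSet L) (x : EuclideanSpace ℝ (Fin n)) :
    volume (K ∩ ({x} - L)) =
      ∫⁻ y, K.indicator 1 y * L.indicator 1 (x - y) := by
  have hs : MeasurableSet (K ∩ ((fun y => x - y) ⁻¹' L)) :=
    hK.inter (hL.preimage (measurable_const.sub measurable_id))
  rw [convAux_inter_sub_eq, ← lintegral_indicator_one hs]
  congr 1
  funext y
  by_cases hy : y ∈ K <;> by_cases hl : x - y ∈ L <;>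
    simp [Set.indicator_apply, hy, hl]

lemma convAux_measurable {n : ℕ} {K L : Set (EuclideanSpace ℝ (Fin n))}
    (hK : MeasurableSet K) (hL : MeasurableSet L) :
    Measurable fun x => volume (K ∩ ({x} - L)) := by
  have : (fun x => volume (K ∩ ({x} - L))) =
      fun x => ∫⁻ y, (fun p : (EuclideanSpace ℝ (Fin n)) × (EuclideanSpace ℝ (Fin n)) =>
        K.indicator 1 p.2 * L.indicator 1 (p.1 - p.2)) (x, y) := by
    funext x; exact convAux_vol_eq hK hL x
  rw [this]
  have hF : Measurable fun p : (EuclideanSpace ℝ (Fin n)) × (EuclideanSpace ℝ (Fin n)) =>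
      K.indicator (1 : EuclideanSpace ℝ (Fin n) → ℝ≥0∞) p.2 * L.indicator 1 (p.1 - p.2) :=
    ((measurable_one.indicator hK).comp measurable_snd).mul
      ((measurable_one.indicator hL).comp (measurable_fst.sub measurable_snd))
  exact hF.lintegral_prod_right'

lemma convAux_fubini {n : ℕ} {K L : Set (EuclideanSpace ℝ (Fin n))}
    (hK : MeasurableSet K) (hL : MeasurableSet L) :
    ∫⁻ x, volume (K ∩ ({x} - L)) = volume K * volume L := by
  have hmeas : Measurable (Function.uncurry fun x y : EuclideanSpace ℝ (Fin n) =>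
      K.indicator (1 : EuclideanSpace ℝ (Fin n) → ℝ≥0∞) y * L.indicator 1 (x - y)) :=
    ((measurable_one.indicator hK).comp measurable_snd).mul
      ((measurable_one.indicator hL).comp (measurable_fst.sub measurable_snd))
  calc ∫⁻ x, volume (K ∩ ({x} - L))
      = ∫⁻ x, ∫⁻ y, K.indicator 1 y * L.indicator 1 (x - y) := by
        simp_rw [convAux_vol_eq hK hL]
    _ = ∫⁻ y, ∫⁻ x, K.indicator 1 y * L.indicator 1 (x - y) :=
        lintegral_lintegral_swap hmeas.aemeasurable
    _ = ∫⁻ y, K.indicator 1 y * ∫⁻ x, L.indicator 1 (x - y) := by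
        congr 1; funext y
        exact lintegral_const_mul _ ((measurable_one.indicator hL).comp (measurable_id.sub measurable_const))
    _ = ∫⁻ y, K.indicator 1 y * volume L := by
        congr 1; funext y
        congr 1
        have : ∀ x : EuclideanSpace ℝ (Fin n), x - y = x + (-y) := fun x => sub_eq_add_neg x y
        simp_rw [this]
        rw [lintegral_add_right_eq_self (L.indicator 1) (-y)]
        exact lintegral_indicator_one hL
    _ = volume K * volume L := by
        rw [lintegral_mul_const _ (measurable_one.indicator hK), lintegral_indicator_one hK]

theorem convBody_integral_volume (n : ℕ) (K L : Set (EuclideanSpace ℝ (Fin n)))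
    (hK : IsCompact K) (hKc : Convex ℝ K) (hKi : (interior K).Nonempty)
    (hL : IsCompact L) (hLc : Convex ℝ L) (hLi : (interior L).Nonempty)
    (hM : (⨆ z : EuclideanSpace ℝ (Fin n), volume (K ∩ ({z} - L))) = volume (K ∩ (-L))) :
    ∫ θ in (0 : ℝ)..1, (volume (convBody n θ K L)).toReal =
      (volume K).toReal * (volume L).toReal / (volume (K ∩ (-L))).toReal := by
  classical
  have hKm : MeasurableSet K := hK.measurableSet
  have hLm : MeasurableSet L := hL.measurableSet
  set f : EuclideanSpace ℝ (Fin n) → ℝ≥0∞ := fun x => volume (K ∩ ({x} - L)) with hfdef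
  have hfmeas : Measurable f := convAux_measurable hKm hLm
  have hfub : ∫⁻ x, f x = volume K * volume L := convAux_fubini hKm hLm
  set M : ℝ≥0∞ := volume (K ∩ (-L)) with hMdef
  have hfle : ∀ x, f x ≤ M := fun x => hM ▸ le_iSup (fun z => volume (K ∩ ({z} - L))) x
  have hKfin : volume K ≠ ∞ := hK.measure_lt_top.ne
  have hLfin : volume L ≠ ∞ := hL.measure_lt_top.ne
  have hK0 : volume K ≠ 0 := (Measure.measure_pos_of_nonempty_interior _ hKi).ne'
  have hL0 : volume L ≠ 0 := (Measure.measure_pos_of_nonempty_interior _ hLi).ne'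
  have hMfin : M ≠ ∞ :=
    ((measure_mono Set.inter_subset_left).trans_lt hK.measure_lt_top).ne
  have hffin : ∀ x, f x ≠ ∞ := fun x => ((hfle x).trans_lt hMfin.lt_top).ne
  have hM0 : M ≠ 0 := by
    intro h
    have hzero : ∀ x, f x = 0 := fun x => le_antisymm (h ▸ hfle x) zero_le
    have : volume K * volume L = 0 := by rw [← hfub]; simp [hzero]
    exact (mul_ne_zero hK0 hL0) this
  -- convolution body coincides with a superlevel set for θ ∈ Ioc 0 1
  have hconv : ∀ θ ∈ Ioc (0:ℝ) 1,
      convBody n θ K L = {x | ENNReal.ofReal θ * M ≤ f x} := by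
    intro θ hθ
    ext x
    simp only [convBody, show (⨆ z : EuclideanSpace ℝ (Fin n), volume (K ∩ ({z} - L))) = M from hM, Set.mem_setOf_eq, Set.mem_sep_iff]
    refine ⟨fun h => h.2, fun h => ⟨?_, h⟩⟩
    have hpos : (0:ℝ≥0∞) < ENNReal.ofReal θ * M :=
      ENNReal.mul_pos (ENNReal.ofReal_pos.2 hθ.1).ne' hM0
    have hne : volume (K ∩ ({x} - L)) ≠ 0 := fun h0 => by
      rw [show volume (K ∩ ({x} - L)) = f x from rfl, ] at h0
      exact absurd (h.trans_eq h0) (not_le.2 hpos)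
    obtain ⟨y, hyK, hyL⟩ := nonempty_of_measure_ne_zero hne
    obtain ⟨a, ha, b, hb, hab⟩ := Set.mem_sub.1 hyL
    rcases Set.mem_singleton_iff.1 ha with rfl
    exact Set.mem_add.2 ⟨y, hyK, b, hb, by rw [← hab]; abel⟩
  set g : ℝ → ℝ≥0∞ := fun θ => volume {x | ENNReal.ofReal θ * M ≤ f x} with hgdef
  have hganti : Antitone g := by
    intro a b hab
    apply measure_mono
    intro x hx
    exact le_trans (mul_le_mul_left (ENNReal.ofReal_le_ofReal hab) M) hx
  have hgmeas : Measurable g := hganti.measurable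
  have haeq : (fun θ => volume (convBody n θ K L)) =ᵐ[volume.restrict (Ioc (0:ℝ) 1)] g := by
    filter_upwards [ae_restrict_mem measurableSet_Ioc] with θ hθ
    rw [hconv θ hθ]
  have haemeas : AEMeasurable (fun θ => volume (convBody n θ K L))
      (volume.restrict (Ioc (0:ℝ) 1)) := hgmeas.aemeasurable.congr haeq.symm
  have hfin : ∀ᵐ θ ∂(volume.restrict (Ioc (0:ℝ) 1)), volume (convBody n θ K L) < ∞ := by
    refine ae_of_all _ fun θ => ?_
    refine (measure_mono ?_).trans_lt (hK.add hL).measure_lt_top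
    exact fun x hx => hx.1
  rw [intervalIntegral.integral_of_le zero_le_one, integral_toReal haemeas hfin]
  have hcongr : ∫⁻ θ in Ioc (0:ℝ) 1, volume (convBody n θ K L) = ∫⁻ θ in Ioc (0:ℝ) 1, g θ :=
    lintegral_congr_ae haeq
  rw [hcongr]
  -- Core computation via Tonelli
  have hgrep : ∀ θ, g θ = ∫⁻ x, (if ENNReal.ofReal θ * M ≤ f x then (1:ℝ≥0∞) else 0) := by
    intro θ
    have hid : g θ = volume {x | ENNReal.ofReal θ * M ≤ f x} := rfl
    rw [hid, ← lintegral_indicator_one (measurableSet_le measurable_const hfmeas)]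
    congr 1; funext x
    by_cases hx : ENNReal.ofReal θ * M ≤ f x <;> simp [Set.indicator_apply, hx]
  have hFmeas : Measurable (Function.uncurry fun (θ:ℝ) (x : EuclideanSpace ℝ (Fin n)) =>
      (if ENNReal.ofReal θ * M ≤ f x then (1:ℝ≥0∞) else 0)) := by
    apply Measurable.ite _ measurable_const measurable_const
    exact measurableSet_le ((ENNReal.measurable_ofReal.comp measurable_fst).mul_const M)
      (hfmeas.comp measurable_snd)
  have hcore : ∫⁻ θ in Ioc (0:ℝ) 1, g θ = volume K * volume L / M := by
    simp_rw [hgrep]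
    rw [lintegral_lintegral_swap hFmeas.aemeasurable]
    have hinner : ∀ x, (∫⁻ θ in Ioc (0:ℝ) 1,
        (if ENNReal.ofReal θ * M ≤ f x then (1:ℝ≥0∞) else 0)) = f x / M := by
      intro x
      have hdivfin : f x / M ≠ ∞ := (ENNReal.div_lt_top (hffin x) hM0).ne
      have hdiv_le : f x / M ≤ 1 := by
        rw [ENNReal.div_le_iff hM0 hMfin, one_mul]; exact hfle x
      set c : ℝ := (f x / M).toReal with hcdef
      have hc0 : 0 ≤ c := ENNReal.toReal_nonneg
      have hc1 : c ≤ 1 := by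
        rw [hcdef]
        calc (f x / M).toReal ≤ (1:ℝ≥0∞).toReal := ENNReal.toReal_mono ENNReal.one_ne_top hdiv_le
          _ = 1 := by simp
      have hP : MeasurableSet {θ : ℝ | ENNReal.ofReal θ * M ≤ f x} :=
        measurableSet_le (ENNReal.measurable_ofReal.mul_const M) measurable_const
      have hiteeq : (fun θ : ℝ => (if ENNReal.ofReal θ * M ≤ f x then (1:ℝ≥0∞) else 0)) =
          {θ : ℝ | ENNReal.ofReal θ * M ≤ f x}.indicator 1 := by
        funext θ
        by_cases hθ : ENNReal.ofReal θ * M ≤ f x <;> simp [Set.indicator_apply, hθ]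
      rw [hiteeq, lintegral_indicator_one hP, Measure.restrict_apply hP]
      have hset : {θ : ℝ | ENNReal.ofReal θ * M ≤ f x} ∩ Ioc 0 1 = Ioc 0 c := by
        ext θ
        simp only [mem_inter_iff, mem_setOf_eq, mem_Ioc]
        constructor
        · rintro ⟨hPθ, hθ0, hθ1⟩
          refine ⟨hθ0, ?_⟩
          have h1 := (ENNReal.le_div_iff_mul_le (Or.inl hM0) (Or.inl hMfin)).2 hPθ
          rw [← ENNReal.ofReal_toReal hdivfin] at h1
          exact (ENNReal.ofReal_le_ofReal_iff hc0).1 h1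
        · rintro ⟨hθ0, hθc⟩
          refine ⟨?_, hθ0, le_trans hθc hc1⟩
          rw [← ENNReal.le_div_iff_mul_le (Or.inl hM0) (Or.inl hMfin),
            ← ENNReal.ofReal_toReal hdivfin]
          exact ENNReal.ofReal_le_ofReal hθc
      rw [hset, Real.volume_Ioc]
      rw [show c - 0 = c from sub_zero c, hcdef, ENNReal.ofReal_toReal hdivfin]
    simp_rw [hinner]
    calc ∫⁻ x, f x / M = (∫⁻ x, f x) / M := by
          simp_rw [div_eq_mul_inv]
          exact lintegral_mul_const _ hfmeas
      _ = volume K * volume L / M := by rw [hfub]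
  rw [hcore, ENNReal.toReal_div, ENNReal.toReal_mul]
end

section
/- For convex bodies K, L in ℝⁿ, |K + L| · M(K,L) ≤ C(2n, n) · |K| · |L|, where C(2n,n) is the central binomial coefficient (Rogers–Shephard inequality for two bodies). -/
open MeasureTheory Set
open scoped Pointwise ENNReal NNReal
lemma beta_nat (k : ℕ) : ∀ j : ℕ, ∫ s in (0:ℝ)..1, s ^ j * (1 - s) ^ k
    = (j.factorial * k.factorial : ℝ) / (j + k + 1).factorial := by
  induction k with
  | zero =>
    intro j
    have hj : (j.factorial : ℝ) ≠ 0 := Nat.cast_ne_zero.mpr j.factorial_ne_zero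
    simp only [pow_zero, mul_one, integral_pow, one_pow, Nat.add_zero, Nat.factorial_one,
      Nat.factorial_succ]
    push_cast
    rw [zero_pow (by omega)]
    field_simp
    norm_num
  | succ k ih =>
    intro j
    have hj1 : ((j : ℝ) + 1) ≠ 0 := by positivity
    have hparts := intervalIntegral.integral_mul_deriv_eq_deriv_mul
      (u := fun x : ℝ => (1 - x) ^ (k + 1))
      (u' := fun x : ℝ => -((k + 1) * (1 - x) ^ k))
      (v := fun x : ℝ => x ^ (j + 1) / (j + 1))
      (v' := fun x : ℝ => x ^ j) (a := 0) (b := 1)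
      (fun x _ => by
        have h1 : HasDerivAt (fun x : ℝ => 1 - x) (-1) x := by
          simpa using (hasDerivAt_id x).const_sub 1
        simpa [mul_comm, mul_assoc, mul_left_comm] using (h1.fun_pow (k + 1)))
      (fun x _ => by
        have := (hasDerivAt_pow (j + 1) x).div_const (j + 1)
        simpa [mul_div_assoc, mul_div_cancel_left₀, hj1, div_self hj1] using this)
      (by apply Continuous.intervalIntegrable; continuity)
      (by apply Continuous.intervalIntegrable; continuity)
    -- hparts : ∫ x in 0..1, (1-x)^(k+1) * x^j = 0 - 0 - ∫ x in 0..1, -((k+1)(1-x)^k) * x^(j+1)/(j+1)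
    have hcomm : (∫ s in (0:ℝ)..1, s ^ j * (1 - s) ^ (k+1))
        = ∫ x in (0:ℝ)..1, (1 - x) ^ (k + 1) * x ^ j := by
      apply intervalIntegral.integral_congr; intro x _; ring
    rw [hcomm, hparts]
    have h2 : (∫ x in (0:ℝ)..1, -((k + 1 : ℝ) * (1 - x) ^ k) * (x ^ (j + 1) / (j + 1)))
        = (-((k+1:ℝ)/(j+1))) * ∫ x in (0:ℝ)..1, x ^ (j+1) * (1 - x) ^ k := by
      rw [← intervalIntegral.integral_const_mul]
      apply intervalIntegral.integral_congr; intro x _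
      field_simp
    rw [h2, ih (j + 1)]
    have e1 : (0:ℝ) ^ (j+1) = 0 := by rw [zero_pow (by omega)]
    simp only [one_pow, sub_self, zero_pow (Nat.succ_ne_zero k), e1, zero_div, mul_zero, zero_mul]
    have hfj : ((j+1).factorial : ℝ) = (j+1) * j.factorial := by
      rw [Nat.factorial_succ]; push_cast; ring
    have hfk : ((k+1).factorial : ℝ) = (k+1) * k.factorial := by
      rw [Nat.factorial_succ]; push_cast; ring
    have harg : (j + 1) + k + 1 = j + (k+1) + 1 := by omega
    rw [harg, hfj, hfk]
    have hne : (((j + (k+1) + 1).factorial : ℝ)) ≠ 0 := Nat.cast_ne_zero.mpr (Nat.factorial_ne_zero _)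
    field_simp
    ring

lemma subst_integral (n : ℕ) (hn : 0 < n) (m : ℝ) (hm : 0 < m) :
    ∫ t in (0:ℝ)..m, (1 - (t / m) ^ ((n:ℝ)⁻¹)) ^ n
      = m * ((n.factorial * n.factorial : ℝ) / (2 * n).factorial) := by
  have hg : Continuous fun t : ℝ => (1 - (t / m) ^ ((n:ℝ)⁻¹)) ^ n := by
    apply Continuous.pow
    apply Continuous.sub continuous_const
    apply Continuous.rpow_const (by continuity)
    intro x; right; positivity
  have key := intervalIntegral.integral_comp_smul_deriv (a := (0:ℝ)) (b := 1)
    (f := fun s : ℝ => m * s ^ n) (f' := fun s : ℝ => m * (n * s ^ (n - 1)))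
    (g := fun t : ℝ => (1 - (t / m) ^ ((n:ℝ)⁻¹)) ^ n)
    (fun x _ => by simpa using (hasDerivAt_pow n x).const_mul m)
    (Continuous.continuousOn (by continuity)) hg
  have h0 : m * (0:ℝ) ^ n = 0 := by rw [zero_pow (by omega)]; ring
  simp only [] at key
  rw [one_pow, mul_one, h0] at key
  rw [← key]
  have hEq : ∀ s ∈ uIcc (0:ℝ) 1,
      (m * (n * s ^ (n - 1))) • ((fun t : ℝ => (1 - (t / m) ^ ((n:ℝ)⁻¹)) ^ n) ∘ (fun s : ℝ => m * s ^ n)) s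
        = (m * n) * (s ^ (n-1) * (1 - s) ^ n) := by
    intro s hs
    rw [uIcc_of_le zero_le_one] at hs
    have hs0 : (0:ℝ) ≤ s := hs.1
    have hroot : (m * s ^ n / m) ^ ((n:ℝ)⁻¹) = s := by
      rw [mul_div_cancel_left₀ _ (ne_of_gt hm), ← Real.rpow_natCast s n,
        ← Real.rpow_mul hs0, mul_inv_cancel₀ (by positivity : (n:ℝ) ≠ 0), Real.rpow_one]
    simp only [Function.comp, smul_eq_mul, hroot]
    ring
  rw [intervalIntegral.integral_congr hEq, intervalIntegral.integral_const_mul, beta_nat n (n-1)]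
  have h1 : (n - 1) + n + 1 = 2 * n := by omega
  have h2 : ((n:ℝ)) * (n-1).factorial = n.factorial := by
    rw [← Nat.cast_mul]
    congr 1
    have hn1 : n - 1 + 1 = n := by omega
    calc n * (n-1).factorial = (n - 1 + 1) * (n-1).factorial := by rw [hn1]
    _ = n.factorial := by rw [← Nat.factorial_succ, hn1]
  rw [h1]
  field_simp
  exact h2

variable {n : ℕ}

lemma sect_eq (K L : Set (EuclideanSpace ℝ (Fin n))) (y : EuclideanSpace ℝ (Fin n)) :
    Prod.mk y ⁻¹' {p : EuclideanSpace ℝ (Fin n) × EuclideanSpace ℝ (Fin n) | p.2 ∈ K ∧ p.1 - p.2 ∈ L}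
      = K ∩ ({y} - L) := by
  ext x
  simp only [mem_preimage, mem_setOf_eq, mem_inter_iff, Set.mem_sub, mem_singleton_iff]
  constructor
  · rintro ⟨hx, hl⟩
    exact ⟨hx, y, rfl, y - x, hl, by abel⟩
  · rintro ⟨hx, a, rfl, b, hb, he⟩
    refine ⟨hx, ?_⟩
    have : b = a - x := by rw [← he]; abel
    rwa [← this]

lemma fubini_g (K L : Set (EuclideanSpace ℝ (Fin n))) (hKm : MeasurableSet K)
    (hLm : MeasurableSet L) :
    ∫⁻ y, volume (K ∩ ({y} - L)) = volume K * volume L := by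
  set S : Set (EuclideanSpace ℝ (Fin n) × EuclideanSpace ℝ (Fin n)) :=
    {p | p.2 ∈ K ∧ p.1 - p.2 ∈ L} with hSdef
  have hS : MeasurableSet S :=
    (hKm.preimage measurable_snd).inter (hLm.preimage (measurable_fst.sub measurable_snd))
  have h1 : (volume.prod volume) S = ∫⁻ y, volume (K ∩ ({y} - L)) := by
    rw [Measure.prod_apply hS]
    exact lintegral_congr fun y => by rw [sect_eq]
  have h2 : (volume.prod volume) S = volume L * volume K := by
    rw [Measure.prod_apply_symm hS]
    have : ∀ x : EuclideanSpace ℝ (Fin n),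
        volume ((fun y => (y, x)) ⁻¹' S) = K.indicator (fun _ => volume L) x := by
      intro x
      by_cases hx : x ∈ K
      · have : ((fun y => (y, x)) ⁻¹' S) = x +ᵥ L := by
          ext y
          simp only [hSdef, mem_preimage, mem_setOf_eq, hx, true_and,
            Set.mem_vadd_set_iff_neg_vadd_mem, vadd_eq_add]
          constructor
          · intro h; convert h using 1; abel
          · intro h; convert h using 1; abel
        rw [this, measure_vadd, indicator_of_mem hx]
      · have : ((fun y => (y, x)) ⁻¹' S) = ∅ := by
          ext y; simp [hSdef, hx]
        rw [this, measure_empty, indicator_of_notMem hx]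
    rw [lintegral_congr this, lintegral_indicator hKm _, setLIntegral_const]
  rw [← h1, h2, mul_comm]

lemma meas_g (K L : Set (EuclideanSpace ℝ (Fin n))) (hKm : MeasurableSet K)
    (hLm : MeasurableSet L) :
    Measurable fun y => volume (K ∩ ({y} - L)) := by
  have hS : MeasurableSet {p : EuclideanSpace ℝ (Fin n) × EuclideanSpace ℝ (Fin n) |
      p.2 ∈ K ∧ p.1 - p.2 ∈ L} :=
    (hKm.preimage measurable_snd).inter (hLm.preimage (measurable_fst.sub measurable_snd))
  have := measurable_measure_prodMk_left (ν := (volume : Measure (EuclideanSpace ℝ (Fin n)))) hS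
  convert this using 2 with y
  rw [sect_eq]

lemma g_bound (K L : Set (EuclideanSpace ℝ (Fin n))) (hKc : Convex ℝ K) (hLc : Convex ℝ L)
    (x₀ y : EuclideanSpace ℝ (Fin n)) (hy : y ∈ K + L) (s : ℝ) (hs : 0 ≤ s) (h1s : s ≤ 1) :
    ENNReal.ofReal (s ^ n) * volume (K ∩ ({x₀} - L))
      ≤ volume (K ∩ ({s • x₀ + (1 - s) • y} - L)) := by
  obtain ⟨k, hk, l, hl, rfl⟩ := hy
  have hincl : (fun a => s • a + (1 - s) • k) '' (K ∩ ({x₀} - L))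
      ⊆ K ∩ ({s • x₀ + (1 - s) • (k + l)} - L) := by
    rintro _ ⟨a, ⟨haK, ⟨u, hu, v, hv, hav⟩⟩, rfl⟩
    rw [mem_singleton_iff] at hu
    rw [hu] at hav
    constructor
    · exact hKc haK hk hs (by linarith) (by ring)
    · refine ⟨s • x₀ + (1 - s) • (k + l), rfl, s • v + (1 - s) • l,
        hLc hv hl hs (by linarith) (by ring), ?_⟩
      simp only at hav
      rw [← hav]
      module
  have himg : (fun a => s • a + (1 - s) • k) '' (K ∩ ({x₀} - L))
      = ((1 - s) • k) +ᵥ (s • (K ∩ ({x₀} - L))) := by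
    rw [← Set.image_vadd, ← Set.image_smul, ← Set.image_comp]
    apply Set.image_congr
    intro a _
    simp [Function.comp, vadd_eq_add, add_comm]
  calc ENNReal.ofReal (s ^ n) * volume (K ∩ ({x₀} - L))
      = volume ((fun a => s • a + (1 - s) • k) '' (K ∩ ({x₀} - L))) := by
        rw [himg, measure_vadd, Measure.addHaar_smul, finrank_euclideanSpace_fin,
          abs_of_nonneg (pow_nonneg hs n)]
    _ ≤ volume (K ∩ ({s • x₀ + (1 - s) • (k + l)} - L)) := measure_mono hincl

theorem RogersShephard_two_bodies (n : ℕ) (K L : Set (EuclideanSpace ℝ (Fin n)))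
    (hK : IsCompact K) (hKc : Convex ℝ K) (hKi : (interior K).Nonempty)
    (hL : IsCompact L) (hLc : Convex ℝ L) (hLi : (interior L).Nonempty) :
    (volume (K + L)).toReal *
        (⨆ z : EuclideanSpace ℝ (Fin n), volume (K ∩ ({z} - L))).toReal ≤
      (Nat.choose (2 * n) n : ℝ) * (volume K).toReal * (volume L).toReal := by
  rcases Nat.eq_zero_or_pos n with hn | hn
  · -- dimension 0 : the space is a subsingleton
    subst hn
    haveI hss : Subsingleton (EuclideanSpace ℝ (Fin 0)) :=
      ⟨fun a b => PiLp.ext fun i => Fin.elim0 i⟩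
    have hKne : K.Nonempty := hKi.mono interior_subset
    have hLne : L.Nonempty := hLi.mono interior_subset
    have hKu : K = univ := hKne.eq_univ
    have hLu : L = univ := hLne.eq_univ
    have hKLu : K + L = univ := (hKne.add hLne).eq_univ
    have hsect : ∀ z : EuclideanSpace ℝ (Fin 0), K ∩ ({z} - L) = univ := by
      intro z
      obtain ⟨x, hxK⟩ := hKne
      obtain ⟨l, hl⟩ := hLne
      have hmem : z - l ∈ ({z} : Set (EuclideanSpace ℝ (Fin 0))) - L :=
        Set.sub_mem_sub rfl hl
      have hzl : z - l = x := Subsingleton.elim _ _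
      exact Set.Nonempty.eq_univ ⟨x, hxK, hzl ▸ hmem⟩
    have hsup : (⨆ z : EuclideanSpace ℝ (Fin 0), volume (K ∩ ({z} - L))) = volume (univ : Set (EuclideanSpace ℝ (Fin 0))) := by
      simp only [hsect]
      exact iSup_const
    rw [hKLu, hsup, hKu, hLu]
    norm_num
  · -- main case
    have hKm : MeasurableSet K := hK.measurableSet
    have hLm : MeasurableSet L := hL.measurableSet
    have hKtop : volume K ≠ ⊤ := hK.measure_lt_top.ne
    have hLtop : volume L ≠ ⊤ := hL.measure_lt_top.ne
    have hVtop : volume (K + L) ≠ ⊤ := (hK.add hL).measure_lt_top.ne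
    set g : EuclideanSpace ℝ (Fin n) → ℝ≥0∞ := fun y => volume (K ∩ ({y} - L)) with hgdef
    have hgK : ∀ y, g y ≤ volume K := fun y => measure_mono inter_subset_left
    have hgtop : ∀ y, g y ≠ ⊤ := fun y => ((hgK y).trans_lt hK.measure_lt_top).ne
    set V := volume (K + L) with hVdef
    set C : ℕ := Nat.choose (2 * n) n with hCdef
    have hc : (C : ℝ) * ((n.factorial * n.factorial : ℝ) / (2 * n).factorial) = 1 := by
      have h := Nat.choose_mul_factorial_mul_factorial (Nat.le_mul_of_pos_left n (by norm_num : 0 < 2))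
      have h2n : (2 * n) - n = n := by omega
      rw [h2n] at h
      have hfac : ((2*n).factorial : ℝ) ≠ 0 := Nat.cast_ne_zero.mpr (Nat.factorial_ne_zero _)
      field_simp
      rw [hCdef]
      norm_cast
      rw [sq, ← mul_assoc]
      exact h
    -- the key ENNReal inequality
    suffices hE : V * (⨆ z, g z) ≤ (C : ℝ≥0∞) * volume K * volume L by
      have hsup_top : (⨆ z, g z) ≠ ⊤ := by
        refine (iSup_le hgK).trans_lt hK.measure_lt_top |>.ne
      calc V.toReal * (⨆ z, g z).toReal = (V * (⨆ z, g z)).toReal := (ENNReal.toReal_mul).symm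
        _ ≤ ((C : ℝ≥0∞) * volume K * volume L).toReal := by
            apply ENNReal.toReal_mono _ hE
            exact ENNReal.mul_ne_top (ENNReal.mul_ne_top (ENNReal.natCast_ne_top C) hKtop) hLtop
        _ = (C : ℝ) * (volume K).toReal * (volume L).toReal := by
            simp [ENNReal.toReal_mul]
    rw [ENNReal.mul_iSup]
    apply iSup_le
    intro x₀
    by_cases hg0 : g x₀ = 0
    · rw [hg0, mul_zero]; exact zero_le
    -- nontrivial maximal section
    set m : ℝ := (g x₀).toReal with hmdef
    have hm : 0 < m := ENNReal.toReal_pos hg0 (hgtop x₀)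
    have hM0 : ENNReal.ofReal m = g x₀ := ENNReal.ofReal_toReal (hgtop x₀)
    set w : ℝ → ℝ := fun t => (1 - (t / m) ^ ((n:ℝ)⁻¹)) ^ n with hwdef
    have hwcont : Continuous w := by
      apply Continuous.pow
      apply Continuous.sub continuous_const
      apply Continuous.rpow_const (by continuity)
      intro x; right; positivity
    set f : EuclideanSpace ℝ (Fin n) → ℝ := fun y => (g y).toReal with hfdef
    have hfm : Measurable f := (meas_g K L hKm hLm).ennreal_toReal
    -- layer cake
    have hlayer : ∫⁻ y, g y = ∫⁻ t in Ioi (0:ℝ), volume {a | t ≤ f a} := by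
      rw [← MeasureTheory.lintegral_eq_lintegral_meas_le volume
        (Filter.Eventually.of_forall fun y => ENNReal.toReal_nonneg) hfm.aemeasurable]
      exact lintegral_congr fun y => (ENNReal.ofReal_toReal (hgtop y)).symm
    -- pointwise level-set bound
    have hpoint : ∀ t ∈ Ioo (0:ℝ) m,
        ENNReal.ofReal (w t) * V ≤ volume {a | t ≤ f a} := by
      intro t ht
      set s : ℝ := (t / m) ^ ((n:ℝ)⁻¹) with hsdef
      have htm0 : 0 ≤ t / m := div_nonneg ht.1.le hm.le
      have hs0 : 0 ≤ s := Real.rpow_nonneg htm0 _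
      have hs1 : s ≤ 1 :=
        Real.rpow_le_one htm0 (le_of_lt ((div_lt_one hm).mpr ht.2)) (by positivity)
      have hsn : s ^ n = t / m := by
        rw [hsdef, ← Real.rpow_natCast ((t/m) ^ ((n:ℝ)⁻¹)) n, ← Real.rpow_mul htm0,
          inv_mul_cancel₀ (by positivity : (n:ℝ) ≠ 0), Real.rpow_one]
      have himg_sub : (fun y => s • x₀ + (1 - s) • y) '' (K + L) ⊆ {a | t ≤ f a} := by
        rintro _ ⟨y, hy, rfl⟩
        have h1 := g_bound K L hKc hLc x₀ y hy s hs0 hs1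
        rw [show volume (K ∩ ({x₀} - L)) = g x₀ from rfl] at h1
        have h2 : ENNReal.ofReal t ≤ g (s • x₀ + (1 - s) • y) := by
          refine le_trans (le_of_eq ?_) h1
          rw [hsn, ← hM0, ← ENNReal.ofReal_mul htm0, div_mul_cancel₀ t hm.ne']
        have h3 := ENNReal.toReal_mono (hgtop _) h2
        rw [ENNReal.toReal_ofReal ht.1.le] at h3
        exact h3
      have himg_eq : (fun y => s • x₀ + (1 - s) • y) '' (K + L)
          = (s • x₀) +ᵥ ((1 - s) • (K + L)) := by
        rw [← Set.image_vadd, ← Set.image_smul, ← Set.image_comp]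
        apply Set.image_congr
        intro a _
        simp [Function.comp, vadd_eq_add]
      calc ENNReal.ofReal (w t) * V
          = volume ((fun y => s • x₀ + (1 - s) • y) '' (K + L)) := by
            rw [himg_eq, measure_vadd, Measure.addHaar_smul, finrank_euclideanSpace_fin,
              abs_of_nonneg (pow_nonneg (by linarith) n)]
        _ ≤ volume {a | t ≤ f a} := measure_mono himg_sub
    -- integrate the bound
    have hwnn : ∀ t ∈ Ioo (0:ℝ) m, 0 ≤ w t := by
      intro t ht
      have : (t / m) ^ ((n:ℝ)⁻¹) ≤ 1 :=
        Real.rpow_le_one (div_nonneg ht.1.le hm.le) (le_of_lt ((div_lt_one hm).mpr ht.2))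
          (by positivity)
      have h0 : 0 ≤ 1 - (t / m) ^ ((n:ℝ)⁻¹) := by linarith
      exact pow_nonneg h0 n
    have hwint : IntegrableOn w (Ioo 0 m) := (hwcont.integrableOn_Icc).mono_set Ioo_subset_Icc_self
    have hchain : V * (g x₀ * ENNReal.ofReal ((n.factorial * n.factorial : ℝ) / (2 * n).factorial))
        ≤ volume K * volume L := by
      have e1 : volume K * volume L = ∫⁻ t in Ioi (0:ℝ), volume {a | t ≤ f a} := by
        rw [← hlayer]; exact (fubini_g K L hKm hLm).symm
      have e2 : (∫⁻ t in Ioo (0:ℝ) m, volume {a | t ≤ f a})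
          ≤ ∫⁻ t in Ioi (0:ℝ), volume {a | t ≤ f a} :=
        lintegral_mono' (Measure.restrict_mono (fun t ht => ht.1) le_rfl) le_rfl
      have e3 : (∫⁻ t in Ioo (0:ℝ) m, ENNReal.ofReal (w t) * V)
          ≤ ∫⁻ t in Ioo (0:ℝ) m, volume {a | t ≤ f a} := by
        apply lintegral_mono_ae
        rw [ae_restrict_iff' measurableSet_Ioo]
        exact Filter.Eventually.of_forall hpoint
      have e4 : (∫⁻ t in Ioo (0:ℝ) m, ENNReal.ofReal (w t) * V)
          = (∫⁻ t in Ioo (0:ℝ) m, ENNReal.ofReal (w t)) * V :=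
        lintegral_mul_const _ (ENNReal.measurable_ofReal.comp hwcont.measurable)
      have e5 : (∫⁻ t in Ioo (0:ℝ) m, ENNReal.ofReal (w t))
          = ENNReal.ofReal (∫ t in Ioo (0:ℝ) m, w t) := by
        rw [MeasureTheory.ofReal_integral_eq_lintegral_ofReal hwint]
        exact (ae_restrict_iff' measurableSet_Ioo).mpr
          (Filter.Eventually.of_forall fun t ht => hwnn t ht)
      have e6 : (∫ t in Ioo (0:ℝ) m, w t)
          = m * ((n.factorial * n.factorial : ℝ) / (2 * n).factorial) := by
        rw [← MeasureTheory.integral_Ioc_eq_integral_Ioo,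
          ← intervalIntegral.integral_of_le hm.le]
        exact subst_integral n hn m hm
      calc V * (g x₀ * ENNReal.ofReal ((n.factorial * n.factorial : ℝ) / (2 * n).factorial))
          = (∫⁻ t in Ioo (0:ℝ) m, ENNReal.ofReal (w t)) * V := by
            rw [e5, e6, ENNReal.ofReal_mul hm.le, hM0]; ring
        _ = ∫⁻ t in Ioo (0:ℝ) m, ENNReal.ofReal (w t) * V := e4.symm
        _ ≤ ∫⁻ t in Ioo (0:ℝ) m, volume {a | t ≤ f a} := e3
        _ ≤ ∫⁻ t in Ioi (0:ℝ), volume {a | t ≤ f a} := e2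
        _ = volume K * volume L := e1.symm
    -- conclude
    have hcpos : (0:ℝ) ≤ (n.factorial * n.factorial : ℝ) / (2 * n).factorial := by positivity
    have hone : (C : ℝ≥0∞) * ENNReal.ofReal ((n.factorial * n.factorial : ℝ) / (2 * n).factorial)
        = 1 := by
      rw [← ENNReal.ofReal_natCast, ← ENNReal.ofReal_mul (Nat.cast_nonneg C), hc,
        ENNReal.ofReal_one]
    calc V * g x₀
        = (C : ℝ≥0∞) * (V * (g x₀ *
            ENNReal.ofReal ((n.factorial * n.factorial : ℝ) / (2 * n).factorial))) := by
          rw [show (C : ℝ≥0∞) * (V * (g x₀ * ENNReal.ofReal _)) =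
            (V * g x₀) * ((C : ℝ≥0∞) * ENNReal.ofReal _) by ring, hone, mul_one]
      _ ≤ (C : ℝ≥0∞) * (volume K * volume L) := mul_le_mul_right hchain _
      _ = (C : ℝ≥0∞) * volume K * volume L := by ring
end

section
/- If K and L are n-dimensional convex bodies in ℝⁿ such that the Minkowski sum K + L is an n-dimensional simplex, then K and L are both n-dimensional simplices that are homothetic to each other. -/
open Set
open scoped Pointwise

/-- `S` is an `n`-dimensional simplex in `ℝⁿ`: the convex hull of `n+1` affinely
independent points. -/
def IsSimplex (n : ℕ) (S : Set (EuclideanSpace ℝ (Fin n))) : Prop :=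
  ∃ p : Fin (n + 1) → EuclideanSpace ℝ (Fin n),
    AffineIndependent ℝ p ∧ S = convexHull ℝ (Set.range p)

/-- `A` and `B` are homothetic: `B = z + λ • A` for some `z` and `λ > 0`. -/
def Homothetic (n : ℕ) (A B : Set (EuclideanSpace ℝ (Fin n))) : Prop :=
  ∃ (z : EuclideanSpace ℝ (Fin n)) (l : ℝ), 0 < l ∧ B = (fun x => z + l • x) '' A

section Aux

variable {n : ℕ}

local notation "E" => EuclideanSpace ℝ (Fin n)

/-- Evaluation of an affine functional on `t + a • x`. -/
lemma affine_eval (g : E →ᵃ[ℝ] ℝ) (t x : E) (a : ℝ) :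
    g (t + a • x) = g t + a * g x - a * g 0 := by
  have h1 : ∀ z : E, g z = g.linear z + g 0 := fun z => by
    simpa using g.map_vadd (0 : E) z
  rw [h1 (t + a • x), h1 t, h1 x]
  rw [map_add, map_smul]
  simp only [smul_eq_mul]
  ring

lemma affine_eval_add (g : E →ᵃ[ℝ] ℝ) (x y : E) :
    g (x + y) = g x + g y - g 0 := by
  have := affine_eval g x y 1
  simpa using this

/-- Minkowski-sum cancellation: if `C + D ⊆ A + B` with `A` closed convex, `B ⊆ D`,
`D` compact nonempty, then `C ⊆ A`. -/
lemma cancel_aux {A B C D : Set E} (hA : IsClosed A) (hAc : Convex ℝ A)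
    (hD : IsCompact D) (hDne : D.Nonempty) (hBD : B ⊆ D)
    (h : C + D ⊆ A + B) : C ⊆ A := by
  intro x hxC
  by_contra hxA
  obtain ⟨f, u, hfx, hfA⟩ := geometric_hahn_banach_point_closed hAc hA hxA
  obtain ⟨y, hyD, hy⟩ := hD.exists_isMinOn hDne f.continuous.continuousOn
  have hxy : x + y ∈ A + B := h (Set.add_mem_add hxC hyD)
  obtain ⟨a, haA, b, hbB, hab⟩ := Set.mem_add.mp hxy
  have h1 : f x + f y = f a + f b := by rw [← map_add, ← map_add, hab]
  have h2 : u < f a := hfA a haA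
  have h3 : f y ≤ f b := hy (hBD hbB)
  linarith

/-- The homothety `x ↦ t + a • x` as an affine map. -/
noncomputable def hmap (t : E) (a : ℝ) : E →ᵃ[ℝ] E where
  toFun := fun x => t + a • x
  linear := a • LinearMap.id
  map_vadd' := fun p v => by
    simp only [LinearMap.smul_apply, LinearMap.id_coe, id_eq, vadd_eq_add, smul_add]
    abel

lemma hmap_apply (t : E) (a : ℝ) (x : E) : hmap t a x = t + a • x := rfl

lemma hmap_inj (t : E) {a : ℝ} (ha : a ≠ 0) : Function.Injective (hmap t a) := by
  intro x y hxy
  simp only [hmap_apply, add_right_inj] at hxy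
  exact smul_right_injective _ ha hxy

lemma hmap_continuous (t : E) (a : ℝ) : Continuous (hmap t a) :=
  continuous_const.add (continuous_id.const_smul a)

end Aux

set_option maxHeartbeats 2000000 in
theorem simplex_sum_decomposition (n : ℕ) (K L : Set (EuclideanSpace ℝ (Fin n)))
    (hK : IsCompact K) (hKc : Convex ℝ K) (hKi : (interior K).Nonempty)
    (hL : IsCompact L) (hLc : Convex ℝ L) (hLi : (interior L).Nonempty)
    (hKL : IsSimplex n (K + L)) :
    IsSimplex n K ∧ IsSimplex n L ∧ Homothetic n K L := by
  have hKne : K.Nonempty := hKi.mono interior_subset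
  have hLne : L.Nonempty := hLi.mono interior_subset
  rcases Nat.eq_zero_or_pos n with hn | hn
  · -- trivial zero-dimensional case
    subst hn
    have hsub : Subsingleton (EuclideanSpace ℝ (Fin 0)) := by
      constructor; intro a b; ext i; exact absurd i.2 (by omega)
    have heq : ∀ {A B : Set (EuclideanSpace ℝ (Fin 0))}, A.Nonempty → B.Nonempty → A = B := by
      intro A B ⟨a, ha⟩ ⟨b, hb⟩
      ext x
      have hxa : x = a := Subsingleton.elim x a
      have hab : a = b := Subsingleton.elim a b
      subst hxa; subst hab
      simp [ha, hb]
    have hKLne : (K + L).Nonempty := hKne.add hLne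
    have h1 : K = K + L := heq hKne hKLne
    have h2 : L = K + L := heq hLne hKLne
    refine ⟨h1 ▸ hKL, h2 ▸ hKL, 0, 1, one_pos, ?_⟩
    rw [show L = K from heq hLne hKne]
    ext x; simp
  -- main case `n ≥ 1`
  obtain ⟨p, hpind, hpS⟩ := hKL
  have hcard : Fintype.card (Fin (n + 1)) = Module.finrank ℝ (EuclideanSpace ℝ (Fin n)) + 1 := by
    simp [finrank_euclideanSpace_fin]
  have htop : affineSpan ℝ (Set.range p) = ⊤ :=
    hpind.affineSpan_eq_top_iff_card_eq_finrank_add_one.mpr hcard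
  let b : AffineBasis (Fin (n + 1)) ℝ (EuclideanSpace ℝ (Fin n)) := ⟨p, hpind, htop⟩
  have hb : ⇑b = p := rfl
  have hSchar : K + L = {x : EuclideanSpace ℝ (Fin n) | ∀ i, 0 ≤ b.coord i x} := by
    rw [hpS, ← hb, b.convexHull_eq_nonneg_coord]
  -- minimizers of each barycentric coordinate on K and on L
  have hmins : ∀ (A : Set (EuclideanSpace ℝ (Fin n))), IsCompact A → A.Nonempty →
      ∀ i, ∃ x ∈ A, IsMinOn (b.coord i) A x := by
    intro A hA hAne i
    exact hA.exists_isMinOn hAne (b.coord i).continuous_of_finiteDimensional.continuousOn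
  choose xk hxkK hxk using fun i => hmins K hK hKne i
  choose yl hylL hyl using fun i => hmins L hL hLne i
  set μ : Fin (n + 1) → ℝ := fun i => b.coord i (xk i) with hμdef
  set ν : Fin (n + 1) → ℝ := fun i => b.coord i (yl i) with hνdef
  set c : Fin (n + 1) → ℝ := fun i => b.coord i 0 with hcdef
  -- key identity : μ i + ν i = c i
  have hkey : ∀ i, μ i + ν i = c i := by
    intro i
    have hle : μ i + ν i - c i ≥ 0 := by
      have hmem : xk i + yl i ∈ K + L := Set.add_mem_add (hxkK i) (hylL i)
      rw [hSchar] at hmem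
      have := hmem i
      rw [affine_eval_add] at this
      linarith
    have hge : μ i + ν i - c i ≤ 0 := by
      obtain ⟨j, hj⟩ : ∃ j : Fin (n + 1), j ≠ i := by
        haveI : Nontrivial (Fin (n + 1)) := Fin.nontrivial_iff_two_le.mpr (by omega)
        exact exists_ne i
      have hpj : p j ∈ K + L := by
        rw [hpS]
        exact subset_convexHull ℝ _ ⟨j, rfl⟩
      obtain ⟨x, hx, y, hy, hxy⟩ := Set.mem_add.mp hpj
      have h0 : b.coord i (p j) = 0 := by
        classical
        rw [← hb]
        rw [b.coord_apply]
        simp [hj.symm]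
      rw [← hxy, affine_eval_add] at h0
      have h1 : μ i ≤ b.coord i x := hxk i hx
      have h2 : ν i ≤ b.coord i y := hyl i hy
      linarith
    linarith
  have hsumc : ∑ i, c i = 1 := b.sum_coord_apply_eq_one 0
  -- strict inequalities at interior points
  have hstrict : ∀ (A : Set (EuclideanSpace ℝ (Fin n))) x₀, x₀ ∈ interior A →
      ∀ i, ∀ x ∈ A, IsMinOn (b.coord i) A x → b.coord i x < b.coord i x₀ := by
    intro A x₀ hx₀ i x hxA hmin
    have hx₀A : x₀ ∈ A := interior_subset hx₀
    have hle0 : (b.coord i) x ≤ (b.coord i) x₀ := hmin hx₀A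
    rcases eq_or_lt_of_le hle0 with heq | hlt
    · exfalso
      -- barycentric coordinate is nonconstant; perturb x₀ inside A
      obtain ⟨j, hj⟩ : ∃ j : Fin (n + 1), j ≠ i := by
        haveI : Nontrivial (Fin (n + 1)) := Fin.nontrivial_iff_two_le.mpr (by omega)
        exact exists_ne i
      set v := p i - p j with hvdef
      have hlv : (b.coord i).linear v = 1 := by
        have h := (b.coord i).linearMap_vsub (p i) (p j)
        have e1 : b.coord i (p i) = 1 := by
          classical
          rw [← hb, b.coord_apply]; simp
        have e2 : b.coord i (p j) = 0 := by
          classical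
          rw [← hb, b.coord_apply]; simp [hj.symm]
        rw [vsub_eq_sub, vsub_eq_sub, e1, e2] at h
        simpa [hvdef] using h
      have hshift : ∀ s : ℝ, b.coord i (x₀ + s • v) = b.coord i x₀ + s := by
        intro s
        have h2 : b.coord i (s • v + x₀) =
            (b.coord i).linear (s • v) + b.coord i x₀ := (b.coord i).map_vadd x₀ (s • v)
        rw [add_comm x₀ (s • v), h2, map_smul, hlv, smul_eq_mul, mul_one, add_comm]
      obtain ⟨ε, hε, hball⟩ := Metric.isOpen_iff.mp isOpen_interior x₀ hx₀
      have hv0 : v ≠ 0 := fun hv => by simp [hv] at hlv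
      have hnv : 0 < ‖v‖ := norm_pos_iff.mpr hv0
      set δ : ℝ := ε / (2 * ‖v‖) with hδdef
      have hδ : 0 < δ := by positivity
      have hmem : x₀ + (-δ) • v ∈ A := by
        apply interior_subset
        apply hball
        rw [Metric.mem_ball, dist_eq_norm]
        have hd : ‖x₀ + (-δ) • v - x₀‖ = δ * ‖v‖ := by
          simp [add_sub_cancel_left, norm_smul, Real.norm_eq_abs, abs_of_pos hδ]
        rw [hd, hδdef]
        rw [div_mul_eq_mul_div, mul_comm 2 ‖v‖, ← div_div, mul_div_assoc,
          div_self (ne_of_gt hnv)]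
        linarith
      have h3 : (b.coord i) x ≤ (b.coord i) (x₀ + (-δ) • v) := hmin hmem
      rw [hshift (-δ), heq] at h3
      linarith
    · exact hlt
  obtain ⟨x₀, hx₀⟩ := hKi
  obtain ⟨y₀, hy₀⟩ := hLi
  have hμlt : ∀ i, μ i < b.coord i x₀ := fun i =>
    hstrict K x₀ hx₀ i (xk i) (hxkK i) (hxk i)
  have hνlt : ∀ i, ν i < b.coord i y₀ := fun i =>
    hstrict L y₀ hy₀ i (yl i) (hylL i) (hyl i)
  set α : ℝ := 1 - ∑ i, μ i with hαdef
  set β : ℝ := 1 - ∑ i, ν i with hβdef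
  have hα : 0 < α := by
    have h1 : ∑ i, μ i < ∑ i, b.coord i x₀ :=
      Finset.sum_lt_sum_of_nonempty Finset.univ_nonempty fun i _ => hμlt i
    have h2 : ∑ i, b.coord i x₀ = 1 := b.sum_coord_apply_eq_one x₀
    rw [h2] at h1
    linarith
  have hβ : 0 < β := by
    have h1 : ∑ i, ν i < ∑ i, b.coord i y₀ :=
      Finset.sum_lt_sum_of_nonempty Finset.univ_nonempty fun i _ => hνlt i
    have h2 : ∑ i, b.coord i y₀ = 1 := b.sum_coord_apply_eq_one y₀
    rw [h2] at h1
    linarith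
  have hαβ : α + β = 1 := by
    have h1 : ∑ i, (μ i + ν i) = ∑ i, c i := Finset.sum_congr rfl fun i _ => hkey i
    rw [Finset.sum_add_distrib, hsumc] at h1
    rw [hαdef, hβdef]
    linarith
  -- the homothetic copies
  classical
  set S := K + L with hSdef
  have hScpt : IsCompact S := hK.add hL
  set t := Finset.univ.affineCombination ℝ p (fun i => μ i + α * c i) with htdef
  set t' := Finset.univ.affineCombination ℝ p (fun i => ν i + β * c i) with ht'def
  have hwt : ∑ i, (μ i + α * c i) = 1 := by
    rw [Finset.sum_add_distrib, ← Finset.mul_sum, hsumc]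
    rw [hαdef]; ring
  have hwt' : ∑ i, (ν i + β * c i) = 1 := by
    rw [Finset.sum_add_distrib, ← Finset.mul_sum, hsumc]
    rw [hβdef]; ring
  have hct : ∀ i, b.coord i t = μ i + α * c i := by
    intro i
    rw [htdef, ← hb]
    exact b.coord_apply_combination_of_mem (Finset.mem_univ i) hwt
  have hct' : ∀ i, b.coord i t' = ν i + β * c i := by
    intro i
    rw [ht'def, ← hb]
    exact b.coord_apply_combination_of_mem (Finset.mem_univ i) hwt'
  have hTcoord : ∀ i x, b.coord i (hmap t α x) = α * b.coord i x + μ i := by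
    intro i x
    rw [hmap_apply, affine_eval, hct i]
    have : b.coord i 0 = c i := rfl
    rw [this]; ring
  have hT'coord : ∀ i x, b.coord i (hmap t' β x) = β * b.coord i x + ν i := by
    intro i x
    rw [hmap_apply, affine_eval, hct' i]
    have : b.coord i 0 = c i := rfl
    rw [this]; ring
  set K' := hmap t α '' S with hK'def
  set L' := hmap t' β '' S with hL'def
  have hK'char : K' = {x : EuclideanSpace ℝ (Fin n) | ∀ i, μ i ≤ b.coord i x} := by
    ext y
    constructor
    · rintro ⟨x, hx, rfl⟩ i
      rw [hSchar] at hx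
      have := hx i
      rw [hTcoord i x]
      nlinarith
    · intro hy
      refine ⟨α⁻¹ • (y - t), ?_, ?_⟩
      · rw [hSchar]
        intro i
        have hTy : hmap t α (α⁻¹ • (y - t)) = y := by
          rw [hmap_apply, smul_smul, mul_inv_cancel₀ (ne_of_gt hα), one_smul]
          abel
        have := hTcoord i (α⁻¹ • (y - t))
        rw [hTy] at this
        have hyi := hy i
        nlinarith
      · rw [hmap_apply, smul_smul, mul_inv_cancel₀ (ne_of_gt hα), one_smul]
        abel
  have hL'char : L' = {x : EuclideanSpace ℝ (Fin n) | ∀ i, ν i ≤ b.coord i x} := by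
    ext y
    constructor
    · rintro ⟨x, hx, rfl⟩ i
      rw [hSchar] at hx
      have := hx i
      rw [hT'coord i x]
      nlinarith
    · intro hy
      refine ⟨β⁻¹ • (y - t'), ?_, ?_⟩
      · rw [hSchar]
        intro i
        have hTy : hmap t' β (β⁻¹ • (y - t')) = y := by
          rw [hmap_apply, smul_smul, mul_inv_cancel₀ (ne_of_gt hβ), one_smul]
          abel
        have := hT'coord i (β⁻¹ • (y - t'))
        rw [hTy] at this
        have hyi := hy i
        nlinarith
      · rw [hmap_apply, smul_smul, mul_inv_cancel₀ (ne_of_gt hβ), one_smul]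
        abel
  have hKK' : K ⊆ K' := by
    rw [hK'char]
    intro x hx i
    exact hxk i hx
  have hLL' : L ⊆ L' := by
    rw [hL'char]
    intro x hx i
    exact hyl i hx
  have hsum : K' + L' ⊆ K + L := by
    rintro z ⟨x, hx, y, hy, rfl⟩
    rw [hK'char] at hx
    rw [hL'char] at hy
    rw [← hSdef, hSchar]
    intro i
    rw [affine_eval_add]
    have h1 := hx i
    have h2 := hy i
    have h3 := hkey i
    have : b.coord i 0 = c i := rfl
    rw [this]
    linarith
  have hK'cpt : IsCompact K' := hScpt.image (hmap_continuous t α)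
  have hL'cpt : IsCompact L' := hScpt.image (hmap_continuous t' β)
  have hL'ne : L'.Nonempty := hLne.mono hLL'
  have hK'ne : K'.Nonempty := hKne.mono hKK'
  have hKeq : K = K' := by
    refine Set.Subset.antisymm hKK' ?_
    exact cancel_aux hK.isClosed hKc hL'cpt hL'ne hLL' hsum
  have hLeq : L = L' := by
    refine Set.Subset.antisymm hLL' ?_
    refine cancel_aux hL.isClosed hLc hK'cpt hK'ne hKK' ?_
    rw [add_comm L' K', add_comm L K]
    exact hsum
  -- conclusions
  have hSconv : S = convexHull ℝ (Set.range p) := hpS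
  have hsimplex : ∀ (tt : EuclideanSpace ℝ (Fin n)) (aa : ℝ), aa ≠ 0 →
      IsSimplex n (hmap tt aa '' S) := by
    intro tt aa ha
    refine ⟨hmap tt aa ∘ p, hpind.map' _ (hmap_inj tt ha), ?_⟩
    rw [hSconv, AffineMap.image_convexHull, Set.range_comp]
  refine ⟨hKeq ▸ hsimplex t α (ne_of_gt hα), hLeq ▸ hsimplex t' β (ne_of_gt hβ), ?_⟩
  refine ⟨t' - (β / α) • t, β / α, div_pos hβ hα, ?_⟩
  rw [hKeq, hLeq, hK'def, hL'def, ← Set.image_comp]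
  apply Set.image_congr
  intro x _
  simp only [Function.comp_apply, hmap_apply]
  rw [smul_add, smul_smul]
  rw [div_mul_cancel₀ _ (ne_of_gt hα)]
  abel
end
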